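/- arXiv:1503.05801 — 4 statements merged into one kernel-verified Lean document; each statement's English description precedes it below -/
import Mathlib

section
/- Let D and D' be positive integers such that D' = D·|α|² for some α ∈ O_K. Then Γ_{K,D} and Γ_{K,D'} are commensurable up to conjugacy in PSU_h(K): there exists γ ∈ PSU_h(K) such that γΓ_{K,D'}γ⁻¹ and Γ_{K,D} are commensurable. -/
open scoped ComplexConjugate Quaternion TensorProduct
open Matrix

noncomputable section

/-- The Hermitian form `h(z) = -z₀ conj z₂ - z₂ conj z₀ + z₁ conj z₁` (a real number). -/
def hform (z : Fin 3 → ℂ) : ℝ :=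
  (-(z 0 * conj (z 2)) - z 2 * conj (z 0) + z 1 * conj (z 1)).re

/-- The Hermitian product associated with `hform`. -/
def hprod (z w : Fin 3 → ℂ) : ℂ :=
  -(z 0 * conj (w 2)) - z 2 * conj (w 0) + z 1 * conj (w 1)

/-- The special unitary group of `hform`, as a set of matrices. -/
def SUhSet : Set (Matrix (Fin 3) (Fin 3) ℂ) :=
  {g | g.det = 1 ∧ ∀ z, hform (g.mulVec z) = hform z}

abbrev SL3C := Matrix.SpecialLinearGroup (Fin 3) ℂ

/-- The special unitary group of `hform`, as a subgroup of `SL₃(ℂ)`. -/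
def SUh : Subgroup SL3C where
  carrier := {g | ∀ z, hform ((g : Matrix (Fin 3) (Fin 3) ℂ).mulVec z) = hform z}
  one_mem' := by intro z; simp
  mul_mem' := by
    intro a b ha hb z
    rw [Matrix.SpecialLinearGroup.coe_mul, ← Matrix.mulVec_mulVec, ha, hb]
  inv_mem' := by
    intro a ha z
    have h1 := ha (((a⁻¹ : SL3C) : Matrix (Fin 3) (Fin 3) ℂ).mulVec z)
    rw [Matrix.mulVec_mulVec, ← Matrix.SpecialLinearGroup.coe_mul, mul_inv_cancel,
      Matrix.SpecialLinearGroup.coe_one, Matrix.one_mulVec] at h1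
    exact h1.symm

/-- The subgroup `𝕌₃·Id` of scalar matrices by cube roots of unity. -/
def U3 : Subgroup SUh where
  carrier := {g | ∃ ζ : ℂ, ζ ^ 3 = 1 ∧ ((g : SL3C) : Matrix (Fin 3) (Fin 3) ℂ) = ζ • 1}
  one_mem' := ⟨1, by norm_num, by simp⟩
  mul_mem' := by
    rintro a b ⟨ζ, h3, hg⟩ ⟨ξ, k3, hh⟩
    refine ⟨ζ * ξ, by rw [mul_pow, h3, k3, one_mul], ?_⟩
    push_cast [Subgroup.coe_mul, Matrix.SpecialLinearGroup.coe_mul]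
    rw [hg, hh, smul_mul_smul_comm, one_mul]
  inv_mem' := by
    rintro a ⟨ζ, h3, hg⟩
    have hζ : ζ ≠ 0 := by
      intro h; rw [h] at h3; norm_num at h3
    refine ⟨ζ⁻¹, by rw [inv_pow, h3, inv_one], ?_⟩
    have h1 : ((a : SL3C) : Matrix (Fin 3) (Fin 3) ℂ) *
        (((a⁻¹ : SUh) : SL3C) : Matrix (Fin 3) (Fin 3) ℂ) = 1 := by
      rw [← Matrix.SpecialLinearGroup.coe_mul, ← Subgroup.coe_mul, mul_inv_cancel,
        Subgroup.coe_one, Matrix.SpecialLinearGroup.coe_one]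
    rw [hg, Matrix.smul_mul, Matrix.one_mul] at h1
    calc (((a⁻¹ : SUh) : SL3C) : Matrix (Fin 3) (Fin 3) ℂ)
        = ζ⁻¹ • (ζ • (((a⁻¹ : SUh) : SL3C) : Matrix (Fin 3) (Fin 3) ℂ)) := by
          rw [smul_smul, inv_mul_cancel₀ hζ, one_smul]
      _ = ζ⁻¹ • (1 : Matrix (Fin 3) (Fin 3) ℂ) := by rw [h1]

instance U3_normal : U3.Normal := by
  constructor
  rintro n ⟨ζ, h3, hn⟩ g
  refine ⟨ζ, h3, ?_⟩
  push_cast [Subgroup.coe_mul, Matrix.SpecialLinearGroup.coe_mul]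
  rw [hn, Matrix.mul_smul, Matrix.mul_one, Matrix.smul_mul]
  simp [Matrix.mul_adjugate, Matrix.SpecialLinearGroup.det_coe]

/-- The projective special unitary group `PSU_h = SU_h/(𝕌₃·Id)`. -/
abbrev PSUhGrp := SUh ⧸ U3

/-- The topology on `SL₃(ℂ)` induced from `M₃(ℂ)`. -/
instance : TopologicalSpace SL3C :=
  TopologicalSpace.induced (fun g => (g : Matrix (Fin 3) (Fin 3) ℂ)) inferInstance

abbrev ProjC2 := Projectivization ℂ (Fin 3 → ℂ)

instance : TopologicalSpace ProjC2 :=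
  instTopologicalSpaceQuotient

lemma mulVecLin_inj (g : SL3C) :
    Function.Injective ((g : Matrix (Fin 3) (Fin 3) ℂ).mulVecLin) := by
  intro x y hxy
  have h := congrArg (fun v => ((g⁻¹ : SL3C) : Matrix (Fin 3) (Fin 3) ℂ).mulVec v) hxy
  simpa [Matrix.mulVecLin_apply, Matrix.mulVec_mulVec,
    Matrix.adjugate_mul, Matrix.SpecialLinearGroup.det_coe, Matrix.one_mulVec, one_smul] using h

/-- The action of an element of `SU_h` on the projective plane. -/
def pact (g : SUh) (p : ProjC2) : ProjC2 :=
  Projectivization.map (((g : SL3C) : Matrix (Fin 3) (Fin 3) ℂ).mulVecLin)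
    (mulVecLin_inj (g : SL3C)) p

lemma pact_mk (g : SUh) (v : Fin 3 → ℂ) (hv : v ≠ 0) :
    pact g (Projectivization.mk ℂ v hv) =
      Projectivization.mk ℂ (((g : SL3C) : Matrix (Fin 3) (Fin 3) ℂ).mulVec v)
        (by simpa [Matrix.mulVecLin_apply] using
          (map_zero (((g : SL3C) : Matrix (Fin 3) (Fin 3) ℂ).mulVecLin) ▸
            (mulVecLin_inj (g : SL3C)).ne hv)) := by
  exact Projectivization.map_mk _ _ v hv

lemma pact_one (p : ProjC2) : pact 1 p = p := by
  induction p using Projectivization.ind with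
  | h v hv => simp [pact_mk]

lemma pact_mul (g h : SUh) (p : ProjC2) : pact (g * h) p = pact g (pact h p) := by
  induction p using Projectivization.ind with
  | h v hv =>
      rw [pact_mk, pact_mk, pact_mk]
      congr 1
      push_cast [Subgroup.coe_mul, Matrix.SpecialLinearGroup.coe_mul]
      rw [Matrix.mulVec_mulVec]

lemma pact_u3 {u : SUh} (hu : u ∈ U3) (p : ProjC2) : pact u p = p := by
  obtain ⟨ζ, h3, hu⟩ := hu
  have hζ : ζ ≠ 0 := by intro h; rw [h] at h3; norm_num at h3
  induction p using Projectivization.ind with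
  | h v hv =>
      rw [pact_mk]
      rw [Projectivization.mk_eq_mk_iff]
      exact ⟨Units.mk0 ζ hζ, by simp [hu, Matrix.smul_mulVec]⟩

/-- The action of an element of `PSU_h` on the projective plane. -/
def pactQ (γ : PSUhGrp) (p : ProjC2) : ProjC2 :=
  Quotient.liftOn' γ (fun g => pact g p) (by
    intro a b hab
    have h : a⁻¹ * b ∈ U3 := QuotientGroup.leftRel_apply.mp hab
    have hb : b = a * (a⁻¹ * b) := by group
    show pact a p = pact b p
    rw [hb, pact_mul, pact_u3 h])

lemma pactQ_mk (g : SUh) (p : ProjC2) :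
    pactQ ((g : PSUhGrp)) p = pact g p := rfl

lemma pactQ_one (p : ProjC2) : pactQ 1 p = p := pact_one p

lemma pactQ_mul (γ δ : PSUhGrp) (p : ProjC2) :
    pactQ (γ * δ) p = pactQ γ (pactQ δ p) := by
  induction γ using Quotient.inductionOn' with
  | h g =>
      induction δ using Quotient.inductionOn' with
      | h d => exact pact_mul g d p

/-- The stabiliser in `PSU_h` of a point of the projective plane. -/
def stabPSU (p : ProjC2) : Subgroup PSUhGrp where
  carrier := {γ | pactQ γ p = p}
  one_mem' := pactQ_one p
  mul_mem' := by
    intro a b ha hb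
    show pactQ (a * b) p = p
    rw [pactQ_mul, hb, ha]
  inv_mem' := by
    intro a ha
    show pactQ a⁻¹ p = p
    conv_lhs => rw [← ha]
    rw [← pactQ_mul, inv_mul_cancel, pactQ_one]

lemma det_mem_subring {S : Subring ℂ} {M : Matrix (Fin 3) (Fin 3) ℂ}
    (h : ∀ i j, M i j ∈ S) : M.det ∈ S := by
  rw [Matrix.det_apply']
  exact sum_mem (fun σ _ =>
    S.mul_mem (intCast_mem S _) (prod_mem (fun i _ => h _ _)))

/-- The subgroup of `SU_h` of matrices with all entries in a given subring of `ℂ`. -/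
def SUhIn (S : Subring ℂ) : Subgroup SUh where
  carrier := {g | ∀ i j, (((g : SUh) : SL3C) : Matrix (Fin 3) (Fin 3) ℂ) i j ∈ S}
  one_mem' := by
    intro i j
    push_cast [Subgroup.coe_one, Matrix.SpecialLinearGroup.coe_one]
    rw [Matrix.one_apply]
    split
    · exact S.one_mem
    · exact S.zero_mem
  mul_mem' := by
    intro a b ha hb i j
    push_cast [Subgroup.coe_mul, Matrix.SpecialLinearGroup.coe_mul]
    rw [Matrix.mul_apply]
    exact sum_mem (fun k _ => S.mul_mem (ha i k) (hb k j))
  inv_mem' := by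
    intro a ha i j
    have hco : (((a⁻¹ : SUh) : SL3C) : Matrix (Fin 3) (Fin 3) ℂ) =
        Matrix.adjugate (((a : SUh) : SL3C) : Matrix (Fin 3) (Fin 3) ℂ) := by
      push_cast []
      exact Matrix.SpecialLinearGroup.coe_inv _
    rw [hco, Matrix.adjugate_apply]
    refine det_mem_subring (fun i' j' => ?_)
    rw [Matrix.updateRow_apply]
    split
    · rw [Pi.single_apply]
      split
      · exact S.one_mem
      · exact S.zero_mem
    · exact ha i' j'

/-- An imaginary quadratic number field, as an intermediate field of `ℂ/ℚ`. -/
def IsImagQuad (K : IntermediateField ℚ ℂ) : Prop :=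
  Module.finrank ℚ K = 2 ∧ ∃ z ∈ K, (z : ℂ).im ≠ 0

/-- The ring of integers of `K`, as a subring of `ℂ`. -/
def ringOfInt (K : IntermediateField ℚ ℂ) : Subring ℂ :=
  (integralClosure ℤ ℂ).toSubring ⊓ K.toSubalgebra.toSubring

/-- `DK` is the discriminant of the imaginary quadratic field `K`. -/
def IsDiscOf (K : IntermediateField ℚ ℂ) (DK : ℤ) : Prop :=
  ∃ ω : ℂ, (2 * ω - DK) ^ 2 = (DK : ℂ) ∧ ringOfInt K = Subring.closure {ω}

/-- The Picard modular group `Γ_K = PSU_h(O_K)`. -/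
def GammaK (K : IntermediateField ℚ ℂ) : Subgroup PSUhGrp :=
  Subgroup.map (QuotientGroup.mk' U3) (SUhIn (ringOfInt K))

/-- The group `PSU_h(K)` of elements of `PSU_h` with entries in `K`. -/
def PSUhRat (K : IntermediateField ℚ ℂ) : Subgroup PSUhGrp :=
  Subgroup.map (QuotientGroup.mk' U3) (SUhIn K.toSubalgebra.toSubring)

/-- A point of `ℙ²(ℂ)` is positive if `h` is positive on it. -/
def PosP (p : ProjC2) : Prop := 0 < hform p.rep

/-- A point of `ℙ²(ℂ)` is rational if it has homogeneous coordinates in `K`. -/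
def RationalP (K : IntermediateField ℚ ℂ) (p : ProjC2) : Prop :=
  ∃ (z : Fin 3 → ℂ) (hz : z ≠ 0), (∀ i, z i ∈ K) ∧ p = Projectivization.mk ℂ z hz

/-- A group is virtually cyclic if it has a cyclic subgroup of finite index. -/
def VirtCyclic (G : Type*) [Group G] : Prop :=
  ∃ H : Subgroup G, IsCyclic H ∧ H.FiniteIndex

/-- A subgroup of `PSU_h` is an extended ℂ-Fuchsian subgroup if it is discrete and fixes
a positive point of `ℙ²(ℂ)`. -/
def IsExtCFuchsian (Γ : Subgroup PSUhGrp) : Prop :=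
  DiscreteTopology Γ ∧ ∃ p : ProjC2, PosP p ∧ Γ ≤ stabPSU p

/-- A maximal nonelementary extended ℂ-Fuchsian subgroup of `Γ_K`. -/
def IsMaxFuchsian (K : IntermediateField ℚ ℂ) (Γ : Subgroup PSUhGrp) : Prop :=
  Γ ≤ GammaK K ∧ IsExtCFuchsian Γ ∧ ¬ VirtCyclic Γ ∧
    ∀ Γ' : Subgroup PSUhGrp, Γ' ≤ GammaK K → IsExtCFuchsian Γ' → ¬ VirtCyclic Γ' →
      Γ ≤ Γ' → Γ' = Γ

/-- The entries `z i` are relatively prime elements of `O_K`. -/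
def RelPrimeOK (K : IntermediateField ℚ ℂ) (z : Fin 3 → ℂ) : Prop :=
  ∀ d : ℂ, d ∈ ringOfInt K → (∀ i, ∃ c ∈ ringOfInt K, z i = d * c) →
    ∃ u ∈ ringOfInt K, d * u = 1

/-- The subgroup `Γ` has discriminant `D`: its fixed rational point, written with
relatively prime homogeneous coordinates in `O_K`, satisfies `h = D`. -/
def HasDisc (K : IntermediateField ℚ ℂ) (Γ : Subgroup PSUhGrp) (D : ℕ) : Prop :=
  ∃ (z : Fin 3 → ℂ) (hz : z ≠ 0), (∀ i, z i ∈ ringOfInt K) ∧ RelPrimeOK K z ∧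
    Γ ≤ stabPSU (Projectivization.mk ℂ z hz) ∧ hform z = D

/-- Two subgroups of `G` are commensurable up to conjugacy in `G`. -/
def CommensUpToConj {G : Type*} [Group G] (Γ Γ' : Subgroup G) : Prop :=
  ∃ g : G, Subgroup.Commensurable (Subgroup.map (MulAut.conj g).toMonoidHom Γ') Γ

/-- The point `[-D : 0 : 1]` of `ℙ²(ℂ)`. -/
def ptD (D : ℕ) : ProjC2 :=
  Projectivization.mk ℂ ![-(D : ℂ), 0, 1] (by
    intro h
    have := congrFun h 2
    simp at this)

/-- The stabiliser `Γ_{K,D}` of `[-D:0:1]` in `Γ_K`. -/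
def GammaKD (K : IntermediateField ℚ ℂ) (D : ℕ) : Subgroup PSUhGrp :=
  GammaK K ⊓ stabPSU (ptD D)

/-- The Poincaré hypersphere. -/
def HS : Set ProjC2 := {p | hform p.rep = 0}

/-- A chain: the intersection of a complex projective line with the hypersphere,
when nonempty and not a single point. -/
def IsChainSet (C : Set ProjC2) : Prop :=
  (∃ W : Submodule ℂ (Fin 3 → ℂ), Module.finrank ℂ W = 2 ∧
    C = {p : ProjC2 | p.rep ∈ W} ∩ HS) ∧ C.Nonempty ∧ ¬ ∃ x, C = {x}

/-- A chain is `K`-arithmetic if its stabiliser in `Γ_K` has a dense orbit in it. -/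
def IsKArithChain (K : IntermediateField ℚ ℂ) (C : Set ProjC2) : Prop :=
  IsChainSet C ∧ ∃ x ∈ C, ∀ y ∈ C,
    y ∈ closure {q : ProjC2 | ∃ γ ∈ GammaK K, pactQ γ '' C = C ∧ pactQ γ x = q}

/-- A quaternion over `ℚ` has integral coordinates. -/
def IntQuat {a b : ℚ} (x : ℍ[ℚ, a, b]) : Prop :=
  (∃ n : ℤ, x.re = n) ∧ (∃ n : ℤ, x.imI = n) ∧ (∃ n : ℤ, x.imJ = n) ∧ (∃ n : ℤ, x.imK = n)

/-- The reduced norm on the quaternion algebra `(a,b/ℚ)`. -/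
def qnorm (a b : ℚ) (x : ℍ[ℚ, a, b]) : ℚ :=
  x.re ^ 2 - a * x.imI ^ 2 - b * x.imJ ^ 2 + a * b * x.imK ^ 2

/-- A subgroup of `PSU_h` arises from the quaternion algebra `(a,b/ℚ)` if it is
commensurable with the image in `PSU_h` of `σ(A(ℤ)¹)` for some `ℚ`-algebra morphism
`σ : A → M₃(ℂ)` with `σ(A(ℤ)¹) ⊆ SU_h`. -/
def ArisesFrom (a b : ℤ) (Γ : Subgroup PSUhGrp) : Prop :=
  ∃ σ : ℍ[ℚ, (a : ℚ), (b : ℚ)] →ₐ[ℚ] Matrix (Fin 3) (Fin 3) ℂ,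
    (∀ x : ℍ[ℚ, (a : ℚ), (b : ℚ)], IntQuat x → qnorm a b x = 1 → σ x ∈ SUhSet) ∧
    Subgroup.Commensurable Γ (Subgroup.closure {γ : PSUhGrp | ∃ g : SUh,
      (∃ x : ℍ[ℚ, (a : ℚ), (b : ℚ)], IntQuat x ∧ qnorm a b x = 1 ∧
        ((g : SL3C) : Matrix (Fin 3) (Fin 3) ℂ) = σ x) ∧ γ = QuotientGroup.mk g})

/-- The explicit matrix realization `σ_{a,b}` of the quaternion algebra `(a,b/ℚ)`. -/
def sigmaMat (a b : ℤ) (x : ℍ[ℚ, (a : ℚ), (b : ℚ)]) : Matrix (Fin 3) (Fin 3) ℂ :=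
  !![(x.re : ℂ) + (x.imI : ℂ) * (Real.sqrt (a : ℝ) : ℂ), 0,
      ((x.imJ : ℂ) + (x.imK : ℂ) * (Real.sqrt (a : ℝ) : ℂ)) *
        (Complex.I * (Real.sqrt |(b : ℝ)| : ℂ));
     0, 1, 0;
     ((x.imJ : ℂ) - (x.imK : ℂ) * (Real.sqrt (a : ℝ) : ℂ)) *
        (Complex.I * (Real.sqrt |(b : ℝ)| : ℂ)), 0,
      (x.re : ℂ) - (x.imI : ℂ) * (Real.sqrt (a : ℝ) : ℂ)]

/-- The matrix `γ₀` conjugating the stabiliser of `[0:1:0]` to that of `[-2D:0:1]`. -/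
def gamma0 (D : ℕ) : Matrix (Fin 3) (Fin 3) ℂ :=
  (-(1 / Real.sqrt 2 : ℝ) : ℂ) •
    !![(Real.sqrt D : ℂ), (Real.sqrt (2 * D) : ℂ), (Real.sqrt D : ℂ);
       1, 0, -1;
       (1 / (2 * Real.sqrt D) : ℂ), -(1 / Real.sqrt (2 * D) : ℂ), (1 / (2 * Real.sqrt D) : ℂ)]

/-- `T` is a division algebra: every nonzero element is invertible. -/
def IsDivisionAlg (T : Type*) [Ring T] : Prop :=
  ∀ x : T, x ≠ 0 → IsUnit x

/-- The polar chain of a positive point `P`: the set of null points orthogonal to `P`. -/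
def polarChain (P : ProjC2) : Set ProjC2 :=
  {q | hprod q.rep P.rep = 0 ∧ hform q.rep = 0}

section AuxGroup

lemma relindex_map_ne_zero {G G' : Type*} [Group G] [Group G'] (f : G →* G')
    {J K : Subgroup G} (h : J.relIndex K ≠ 0) :
    (J.map f).relIndex (K.map f) ≠ 0 := by
  rw [Subgroup.relIndex, Subgroup.index, Nat.card_ne_zero] at h ⊢
  obtain ⟨hne, hfin⟩ := h
  refine ⟨⟨Quotient.mk'' 1⟩, ?_⟩
  have hsurj : Function.Surjective
      (fun q : K ⧸ J.subgroupOf K => Quotient.map'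
        (fun k : K => (⟨f k, Subgroup.mem_map_of_mem f k.2⟩ : K.map f))
        (by
          intro x y hxy
          rw [QuotientGroup.leftRel_apply] at hxy ⊢
          rw [Subgroup.mem_subgroupOf] at hxy ⊢
          have : f ((x : G)⁻¹ * (y : G)) ∈ J.map f := Subgroup.mem_map_of_mem f hxy
          simpa only [_root_.map_mul, _root_.map_inv, MulMemClass.coe_mul, InvMemClass.coe_inv]
            using this) q) := by
    intro q
    induction q using Quotient.inductionOn' with
    | h z =>
      obtain ⟨k, hk, hfk⟩ := z.2
      refine ⟨Quotient.mk'' ⟨k, hk⟩, ?_⟩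
      simp only [Quotient.map'_mk'']
      congr 1
      exact Subtype.ext hfk
  exact Finite.of_surjective _ hsurj

lemma commensurable_map {G G' : Type*} [Group G] [Group G'] (f : G →* G')
    {A B : Subgroup G} (h : Subgroup.Commensurable A B) :
    Subgroup.Commensurable (A.map f) (B.map f) := by
  obtain ⟨h1, h2⟩ := h
  constructor
  · have k1 : (A ⊓ B).relIndex B ≠ 0 := by rwa [Subgroup.inf_relIndex_right]
    have k2 := relindex_map_ne_zero f k1
    have le1 : (A ⊓ B).map f ≤ A.map f ⊓ B.map f :=
      le_inf (Subgroup.map_mono inf_le_left) (Subgroup.map_mono inf_le_right)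
    have := Subgroup.relIndex_dvd_of_le_left (B.map f) le1
    rw [Subgroup.inf_relIndex_right] at this
    exact fun hz => k2 (Nat.eq_zero_of_zero_dvd (hz ▸ this))
  · have k1 : (B ⊓ A).relIndex A ≠ 0 := by rwa [Subgroup.inf_relIndex_right]
    have k2 := relindex_map_ne_zero f k1
    have le1 : (B ⊓ A).map f ≤ B.map f ⊓ A.map f :=
      le_inf (Subgroup.map_mono inf_le_left) (Subgroup.map_mono inf_le_right)
    have := Subgroup.relIndex_dvd_of_le_left (A.map f) le1
    rw [Subgroup.inf_relIndex_right] at this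
    exact fun hz => k2 (Nat.eq_zero_of_zero_dvd (hz ▸ this))

lemma commensurable_inf {G : Type*} [Group G] {A B : Subgroup G} (S : Subgroup G)
    (h : Subgroup.Commensurable A B) : Subgroup.Commensurable (A ⊓ S) (B ⊓ S) := by
  obtain ⟨h1, h2⟩ := h
  constructor
  · have k2 : (A ⊓ B).relIndex (B ⊓ S) ≠ 0 :=
      fun hz => h1 (by
        have := Subgroup.relIndex_eq_zero_of_le_right (inf_le_left : B ⊓ S ≤ B) hz
        rwa [Subgroup.inf_relIndex_right] at this)
    have le1 : A ⊓ B ⊓ (B ⊓ S) ≤ (A ⊓ S) ⊓ (B ⊓ S) := by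
      refine le_inf (le_inf ?_ ?_) inf_le_right
      · exact le_trans inf_le_left inf_le_left
      · exact le_trans inf_le_right inf_le_right
    have hd := Subgroup.relIndex_dvd_of_le_left (B ⊓ S) le1
    rw [Subgroup.inf_relIndex_right, Subgroup.inf_relIndex_right] at hd
    exact fun hz => k2 (Nat.eq_zero_of_zero_dvd (hz ▸ hd))
  · have k2 : (B ⊓ A).relIndex (A ⊓ S) ≠ 0 :=
      fun hz => h2 (by
        have := Subgroup.relIndex_eq_zero_of_le_right (inf_le_left : A ⊓ S ≤ A) hz
        rwa [Subgroup.inf_relIndex_right] at this)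
    have le1 : B ⊓ A ⊓ (A ⊓ S) ≤ (B ⊓ S) ⊓ (A ⊓ S) := by
      refine le_inf (le_inf ?_ ?_) inf_le_right
      · exact le_trans inf_le_left inf_le_left
      · exact le_trans inf_le_right inf_le_right
    have hd := Subgroup.relIndex_dvd_of_le_left (A ⊓ S) le1
    rw [Subgroup.inf_relIndex_right, Subgroup.inf_relIndex_right] at hd
    exact fun hz => k2 (Nat.eq_zero_of_zero_dvd (hz ▸ hd))

end AuxGroup

section AuxField

lemma exists_quad (K : IntermediateField ℚ ℂ) (hK : Module.finrank ℚ K = 2)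
    {z : ℂ} (hz : z ∈ K) : ∃ u v : ℚ, z ^ 2 = (u : ℂ) + (v : ℂ) * z := by
  haveI : Module.Finite ℚ K := Module.finite_of_finrank_eq_succ hK
  set x : K := ⟨z, hz⟩ with hx
  have hni : ¬ LinearIndependent ℚ ![(1 : K), x, x ^ 2] := by
    intro h
    have := h.fintype_card_le_finrank
    rw [hK] at this
    simp at this
  rw [Fintype.not_linearIndependent_iff] at hni
  obtain ⟨g, hsum, i, hgi⟩ := hni
  rw [Fin.sum_univ_three] at hsum
  simp only [Matrix.cons_val_zero, Matrix.cons_val_one, Matrix.head_cons,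
    Matrix.cons_val_two, Matrix.tail_cons] at hsum
  have coeeq : (g 0 : ℂ) + (g 1 : ℂ) * z + (g 2 : ℂ) * z ^ 2 = 0 := by
    have := congrArg (fun y : K => (y : ℂ)) hsum
    push_cast at this
    simpa [hx, Rat.smul_def] using this
  by_cases h2 : g 2 = 0
  · by_cases h1 : g 1 = 0
    · exfalso
      rw [h2, h1] at coeeq
      simp at coeeq
      fin_cases i <;> simp_all
    · have h1c : (g 1 : ℂ) ≠ 0 := by exact_mod_cast h1
      have hzr : z = (-(g 0) / g 1 : ℚ) := by
        rw [h2] at coeeq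
        push_cast at coeeq ⊢
        rw [eq_div_iff h1c]
        linear_combination coeeq
      exact ⟨0, -(g 0) / g 1, by rw [← hzr]; push_cast; ring⟩
  · refine ⟨-(g 0) / g 2, -(g 1) / g 2, ?_⟩
    have h2c : (g 2 : ℂ) ≠ 0 := by exact_mod_cast h2
    push_cast
    field_simp
    linear_combination coeeq

lemma conj_mem_field (K : IntermediateField ℚ ℂ) (hK : Module.finrank ℚ K = 2)
    {z : ℂ} (hz : z ∈ K) : conj z ∈ K := by
  obtain ⟨u, v, huv⟩ := exists_quad K hK hz
  have hc : (conj z) ^ 2 = (u : ℂ) + (v : ℂ) * conj z := by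
    have := congrArg (fun w => conj w) huv
    simpa [_root_.map_add, _root_.map_mul, _root_.map_pow, Complex.conj_ofReal] using this
  have key : (conj z - z) * (conj z + z - v) = 0 := by
    ring_nf
    linear_combination hc - huv
  have hvK : (v : ℂ) ∈ K := by
    have := K.algebraMap_mem v
    simpa using this
  rcases mul_eq_zero.mp key with h | h
  · have : conj z = z := by linear_combination h
    rw [this]; exact hz
  · have : conj z = (v : ℂ) - z := by linear_combination h
    rw [this]
    exact K.sub_mem hvK hz

lemma mem_ringOfInt {K : IntermediateField ℚ ℂ} {z : ℂ} :
    z ∈ ringOfInt K ↔ IsIntegral ℤ z ∧ z ∈ K := by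
  rw [ringOfInt, Subring.mem_inf]
  rfl

lemma conj_mem_intClosure {z : ℂ} (hz : IsIntegral ℤ z) : IsIntegral ℤ (conj z) :=
  hz.map (starRingEnd ℂ).toIntAlgHom

lemma finite_mod_quot {A : Type*} [CommRing A] [Module.Finite ℤ A] (L : ℕ) (hL : L ≠ 0) :
    Finite (A ⧸ Ideal.span {(L : A)}) := by
  haveI : NeZero L := ⟨hL⟩
  obtain ⟨s, hs⟩ := Module.Finite.fg_top (R := ℤ) (M := A)
  have key : ∀ z : ℤ, (L : ℤ) ∣ z → ∀ a : A, z • a ∈ Ideal.span {(L : A)} := by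
    intro z hz a
    obtain ⟨k, rfl⟩ := hz
    rw [zsmul_eq_mul]
    push_cast
    exact Ideal.mul_mem_right _ _ (Ideal.mul_mem_right _ _
      (Ideal.subset_span (Set.mem_singleton _)))
  refine Finite.of_surjective (f := fun v : { x // x ∈ s } → ZMod L =>
    Ideal.Quotient.mk (Ideal.span {(L : A)})
      (∑ i ∈ s.attach, (((v i).val : ℤ) • (i : A)))) ?_
  intro q
  obtain ⟨x, rfl⟩ := Ideal.Quotient.mk_surjective q
  have hx : x ∈ Submodule.span ℤ (s : Set A) := hs ▸ Submodule.mem_top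
  rw [Submodule.mem_span_finset] at hx
  obtain ⟨c, -, hc⟩ := hx
  refine ⟨fun i => ((c (i : A) : ℤ) : ZMod L), ?_⟩
  rw [Ideal.Quotient.eq]
  have hxs : x = ∑ i ∈ s.attach, c (i : A) • (i : A) := by
    rw [Finset.sum_attach s (fun a => c a • a)]
    exact hc.symm
  rw [hxs, ← Finset.sum_sub_distrib]
  refine Submodule.sum_mem _ (fun i _ => ?_)
  rw [← sub_smul]
  refine key _ ?_ _
  have : ((((c (i : A) : ZMod L).val : ℤ) - c (i : A) : ℤ) : ZMod L) = 0 := by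
    push_cast
    rw [ZMod.natCast_val, ZMod.cast_id]
    ring
  exact (ZMod.intCast_zmod_eq_zero_iff_dvd _ _).mp this

lemma moduleFinite_ringOfInt (K : IntermediateField ℚ ℂ)
    (hK2 : Module.finrank ℚ K = 2) : Module.Finite ℤ (ringOfInt K) := by
  haveI : FiniteDimensional ℚ K := Module.finite_of_finrank_eq_succ hK2
  haveI : CharZero K := charZero_of_injective_algebraMap (algebraMap ℚ K).injective
  haveI : NumberField K := ⟨⟩
  let f : NumberField.RingOfIntegers K →+* ℂ :=
    (algebraMap K ℂ).comp (algebraMap (NumberField.RingOfIntegers K) K)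
  have hmem : ∀ x, f x ∈ ringOfInt K := by
    intro x
    rw [mem_ringOfInt]
    constructor
    · exact (NumberField.RingOfIntegers.isIntegral_coe x).map (IsScalarTower.toAlgHom ℤ K ℂ)
    · exact SetLike.coe_mem _
  let ψ := f.codRestrict (ringOfInt K) hmem
  have hsurj : Function.Surjective ψ := by
    rintro ⟨r, hr⟩
    have hr' := mem_ringOfInt.mp hr
    have hy : IsIntegral ℤ (⟨r, hr'.2⟩ : K) := by
      rw [← isIntegral_algebraMap_iff (algebraMap K ℂ).injective]
      exact hr'.1
    exact ⟨⟨⟨r, hr'.2⟩, hy⟩, rfl⟩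
  exact Module.Finite.of_surjective (ψ.toAddMonoidHom.toIntLinearMap) hsurj

end AuxField

section AuxSUh

/-- The underlying matrix of an element of `SUh`. -/
abbrev matOf (u : SUh) : Matrix (Fin 3) (Fin 3) ℂ := ((u : SL3C) : Matrix (Fin 3) (Fin 3) ℂ)

lemma matOf_mul (u v : SUh) : matOf (u * v) = matOf u * matOf v := rfl

lemma matOf_one : matOf 1 = 1 := rfl

lemma mem_SUhIn {S : Subring ℂ} {u : SUh} : u ∈ SUhIn S ↔ ∀ i j, matOf u i j ∈ S := Iff.rfl

/-- The principal congruence subgroup of level `L` in `SU_h(O_K)`. -/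
def CongrSub (K : IntermediateField ℚ ℂ) (L : ℕ) : Subgroup SUh where
  carrier := {x | ∃ Y : Matrix (Fin 3) (Fin 3) ℂ, (∀ i j, Y i j ∈ ringOfInt K) ∧
    matOf x = 1 + (L : ℂ) • Y}
  one_mem' := ⟨0, fun i j => by simpa using Subring.zero_mem _, by simp [matOf_one]⟩
  mul_mem' := by
    rintro a b ⟨Y, hY, ha⟩ ⟨Z, hZ, hb⟩
    refine ⟨Y + Z + (L : ℂ) • (Y * Z), ?_, ?_⟩
    · intro i j
      simp only [Matrix.add_apply, Matrix.smul_apply, Matrix.mul_apply, smul_eq_mul]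
      refine Subring.add_mem _ (Subring.add_mem _ (hY i j) (hZ i j)) ?_
      refine Subring.mul_mem _ (natCast_mem _ L) ?_
      exact sum_mem (fun k _ => Subring.mul_mem _ (hY i k) (hZ k j))
    · rw [matOf_mul, ha, hb]
      simp only [Matrix.add_mul, Matrix.mul_add, Matrix.one_mul, Matrix.mul_one,
        Matrix.smul_mul, Matrix.mul_smul, smul_add, smul_smul]
      abel
  inv_mem' := by
    rintro a ⟨Y, hY, ha⟩
    have haR : ∀ i j, matOf a i j ∈ ringOfInt K := by
      intro i j
      rw [ha]
      simp only [Matrix.add_apply, Matrix.smul_apply, smul_eq_mul]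
      refine Subring.add_mem _ ?_ (Subring.mul_mem _ (natCast_mem _ L) (hY i j))
      rw [Matrix.one_apply]
      split
      · exact Subring.one_mem _
      · exact Subring.zero_mem _
    have hainv : ∀ i j, matOf a⁻¹ i j ∈ ringOfInt K :=
      (SUhIn (ringOfInt K)).inv_mem (mem_SUhIn.mpr haR)
    refine ⟨-(matOf a⁻¹ * Y), ?_, ?_⟩
    · intro i j
      simp only [Matrix.neg_apply, Matrix.mul_apply]
      refine Subring.neg_mem _ (sum_mem (fun k _ => Subring.mul_mem _ (hainv i k) (hY k j)))
    · have h1 : matOf a⁻¹ * matOf a = 1 := by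
        rw [← matOf_mul, inv_mul_cancel, matOf_one]
      have h2 : matOf a⁻¹ + (L : ℂ) • (matOf a⁻¹ * Y) = 1 := by
        rw [← h1, ha, Matrix.mul_add, Matrix.mul_one, Matrix.mul_smul]
      rw [smul_neg, ← sub_eq_add_neg]
      exact eq_sub_of_add_eq h2

lemma CongrSub_le (K : IntermediateField ℚ ℂ) (L : ℕ) :
    CongrSub K L ≤ SUhIn (ringOfInt K) := by
  rintro a ⟨Y, hY, ha⟩
  intro i j
  show matOf a i j ∈ ringOfInt K
  rw [ha]
  simp only [Matrix.add_apply, Matrix.smul_apply, smul_eq_mul]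
  refine Subring.add_mem _ ?_ (Subring.mul_mem _ (natCast_mem _ L) (hY i j))
  rw [Matrix.one_apply]
  split
  · exact Subring.one_mem _
  · exact Subring.zero_mem _

set_option maxHeartbeats 1000000 in
set_option synthInstance.maxHeartbeats 400000 in
lemma relindex_CongrSub (K : IntermediateField ℚ ℂ) (hK2 : Module.finrank ℚ K = 2)
    (L : ℕ) (hL : L ≠ 0) :
    (CongrSub K L).relIndex (SUhIn (ringOfInt K)) ≠ 0 := by
  haveI := moduleFinite_ringOfInt K hK2
  haveI : Finite ((ringOfInt K) ⧸ Ideal.span {(L : (ringOfInt K))}) := finite_mod_quot L hL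
  set R := ringOfInt K
  set I : Ideal R := Ideal.span {(L : R)} with hI
  set Γ := SUhIn R with hΓ
  have hLc : (L : ℂ) ≠ 0 := Nat.cast_ne_zero.mpr hL
  -- the reduction map
  set ρ : Γ → Matrix (Fin 3) (Fin 3) (R ⧸ I) :=
    (fun x => fun i j => Ideal.Quotient.mk I ⟨matOf (x : SUh) i j, x.2 i j⟩) with hρ
  have ρ_mul : ∀ x y : Γ, ρ (x * y) = ρ x * ρ y := by
    intro x y
    funext i j
    have hentry : (⟨matOf ((x * y : Γ) : SUh) i j, (x * y).2 i j⟩ : R)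
        = ∑ k, (⟨matOf (x : SUh) i k, x.2 i k⟩ : R) * ⟨matOf (y : SUh) k j, y.2 k j⟩ := by
      apply Subtype.ext
      push_cast
      show matOf ((x : SUh) * (y : SUh)) i j = _
      rw [matOf_mul, Matrix.mul_apply]
    show Ideal.Quotient.mk I _ = (ρ x * ρ y) i j
    rw [Matrix.mul_apply, hentry, map_sum]
    exact Finset.sum_congr rfl (fun k _ => (_root_.map_mul _ _ _))
  have ρ_one : ρ (1 : Γ) = 1 := by
    funext i j
    show Ideal.Quotient.mk I _ = _
    by_cases h : i = j
    · subst h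
      have : (⟨matOf ((1 : Γ) : SUh) i i, (1 : Γ).2 i i⟩ : R) = 1 := by
        apply Subtype.ext
        show matOf (1 : SUh) i i = 1
        rw [matOf_one, Matrix.one_apply_eq]
      rw [this, _root_.map_one, Matrix.one_apply_eq]
    · have : (⟨matOf ((1 : Γ) : SUh) i j, (1 : Γ).2 i j⟩ : R) = 0 := by
        apply Subtype.ext
        show matOf (1 : SUh) i j = 0
        rw [matOf_one, Matrix.one_apply_ne h]
      rw [this, _root_.map_zero, Matrix.one_apply_ne h]
  have dir2 : ∀ x : Γ, ((x : SUh) ∈ CongrSub K L) → ρ x = 1 := by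
    rintro x ⟨Y, hY, hx⟩
    funext i j
    show Ideal.Quotient.mk I _ = _
    by_cases h : i = j
    · subst h
      rw [Matrix.one_apply_eq, ← _root_.map_one (Ideal.Quotient.mk I), Ideal.Quotient.eq]
      refine Ideal.mem_span_singleton.mpr ⟨⟨Y i i, hY i i⟩, ?_⟩
      apply Subtype.ext
      push_cast
      rw [hx]
      simp [Matrix.one_apply_eq]
    · rw [Matrix.one_apply_ne h, ← _root_.map_zero (Ideal.Quotient.mk I), Ideal.Quotient.eq]
      refine Ideal.mem_span_singleton.mpr ⟨⟨Y i j, hY i j⟩, ?_⟩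
      apply Subtype.ext
      push_cast
      rw [hx]
      simp [Matrix.one_apply_ne h]
  have dir1 : ∀ x : Γ, ρ x = 1 → ((x : SUh) ∈ CongrSub K L) := by
    intro x hxρ
    refine ⟨(L : ℂ)⁻¹ • (matOf (x : SUh) - 1), ?_, ?_⟩
    · intro i j
      have hij := congrFun (congrFun hxρ i) j
      simp only [hρ] at hij
      by_cases h : i = j
      · subst h
        rw [Matrix.one_apply_eq, ← _root_.map_one (Ideal.Quotient.mk I), Ideal.Quotient.eq] at hij
        obtain ⟨r, hr⟩ := Ideal.mem_span_singleton.mp hij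
        have hrC : matOf (x : SUh) i i - 1 = (L : ℂ) * (r : ℂ) := by
          have h' := congrArg (fun t : R => (t : ℂ)) hr
          push_cast at h'
          exact_mod_cast h'
        simp only [Matrix.smul_apply, Matrix.sub_apply, Matrix.one_apply_eq, smul_eq_mul]
        rw [hrC, inv_mul_cancel_left₀ hLc]
        exact r.2
      · rw [Matrix.one_apply_ne h, ← _root_.map_zero (Ideal.Quotient.mk I), Ideal.Quotient.eq] at hij
        obtain ⟨r, hr⟩ := Ideal.mem_span_singleton.mp hij
        have hrC : matOf (x : SUh) i j - 0 = (L : ℂ) * (r : ℂ) := by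
          have h' := congrArg (fun t : R => (t : ℂ)) hr
          push_cast at h'
          exact_mod_cast h'
        simp only [Matrix.smul_apply, Matrix.sub_apply, Matrix.one_apply_ne h, smul_eq_mul]
        rw [hrC, inv_mul_cancel_left₀ hLc]
        exact r.2
    · rw [smul_smul, mul_inv_cancel₀ hLc, one_smul]
      abel
  -- build the injection on the quotient
  rw [Subgroup.relIndex, Subgroup.index, Nat.card_ne_zero]
  refine ⟨⟨Quotient.mk'' 1⟩, ?_⟩
  have hF : ∀ x y : Γ, (QuotientGroup.leftRel ((CongrSub K L).subgroupOf Γ)).r x y →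
      ρ x = ρ y := by
    intro x y hxy
    rw [QuotientGroup.leftRel_apply, Subgroup.mem_subgroupOf] at hxy
    have : ρ (x * (x⁻¹ * y)) = ρ x * ρ (x⁻¹ * y) := ρ_mul _ _
    rw [mul_inv_cancel_left] at this
    rw [this, dir2 (x⁻¹ * y) hxy, mul_one]
  set F : Γ ⧸ ((CongrSub K L).subgroupOf Γ) → Matrix (Fin 3) (Fin 3) (R ⧸ I) :=
    fun q => Quotient.liftOn' q ρ hF with hFdef
  have hFinj : Function.Injective F := by
    intro q q'
    induction q using Quotient.inductionOn' with
    | h x =>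
      induction q' using Quotient.inductionOn' with
      | h y =>
        intro hq
        have hq' : ρ x = ρ y := hq
        apply Quotient.sound'
        rw [QuotientGroup.leftRel_apply, Subgroup.mem_subgroupOf]
        have : ρ (x⁻¹ * y) = 1 := by
          rw [ρ_mul, ← hq']
          rw [← ρ_mul, inv_mul_cancel, ρ_one]
        exact_mod_cast dir1 _ this
  exact Finite.of_injective F hFinj

end AuxSUh


section Upstairs

lemma conj_congr_mem (K : IntermediateField ℚ ℂ) {n : ℕ}
    (u : SUh) (ud ud' : Fin 3 → ℂ)
    (hu : matOf u = Matrix.diagonal ud) (hu' : matOf u⁻¹ = Matrix.diagonal ud')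
    (hd : ∀ i, (n : ℂ) * ud i ∈ ringOfInt K) (hd' : ∀ i, (n : ℂ) * ud' i ∈ ringOfInt K)
    {x : SUh} (hx : x ∈ CongrSub K (n ^ 2)) : u * x * u⁻¹ ∈ SUhIn (ringOfInt K) := by
  obtain ⟨Y, hY, hxM⟩ := hx
  have hdd : Matrix.diagonal ud * Matrix.diagonal ud' = 1 := by
    rw [← hu, ← hu', ← matOf_mul, mul_inv_cancel, matOf_one]
  have hm : matOf (u * x * u⁻¹)
      = 1 + ((n ^ 2 : ℕ) : ℂ) • (Matrix.diagonal ud * Y * Matrix.diagonal ud') := by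
    rw [matOf_mul, matOf_mul, hu, hu', hxM, Matrix.mul_add, Matrix.mul_one, Matrix.add_mul,
      hdd, Matrix.mul_smul, Matrix.smul_mul]
  intro i j
  show matOf (u * x * u⁻¹) i j ∈ ringOfInt K
  rw [hm]
  simp only [Matrix.add_apply, Matrix.smul_apply, Matrix.mul_diagonal, Matrix.diagonal_mul,
    smul_eq_mul]
  refine Subring.add_mem _ ?_ ?_
  · rw [Matrix.one_apply]
    split
    · exact Subring.one_mem _
    · exact Subring.zero_mem _
  · have hident : ((n ^ 2 : ℕ) : ℂ) * (ud i * Y i j * ud' j)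
        = ((n : ℂ) * ud i) * ((n : ℂ) * ud' j) * Y i j := by push_cast; ring
    rw [hident]
    exact Subring.mul_mem _ (Subring.mul_mem _ (hd i) (hd' j)) (hY i j)

lemma commensurable_conj_SUhIn (K : IntermediateField ℚ ℂ) (hK2 : Module.finrank ℚ K = 2)
    (u : SUh) (ud ud' : Fin 3 → ℂ)
    (hu : matOf u = Matrix.diagonal ud) (hu' : matOf u⁻¹ = Matrix.diagonal ud')
    (n : ℕ) (hn : n ≠ 0)
    (hd : ∀ i, (n : ℂ) * ud i ∈ ringOfInt K) (hd' : ∀ i, (n : ℂ) * ud' i ∈ ringOfInt K) :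
    Subgroup.Commensurable (Subgroup.map (MulAut.conj u).toMonoidHom (SUhIn (ringOfInt K)))
      (SUhIn (ringOfInt K)) := by
  have hrel : (CongrSub K (n ^ 2)).relIndex (SUhIn (ringOfInt K)) ≠ 0 :=
    relindex_CongrSub K hK2 _ (pow_ne_zero _ hn)
  have hcu : ∀ x ∈ CongrSub K (n ^ 2), u * x * u⁻¹ ∈ SUhIn (ringOfInt K) :=
    fun x hx => conj_congr_mem K u ud ud' hu hu' hd hd' hx
  have hcu' : ∀ x ∈ CongrSub K (n ^ 2), u⁻¹ * x * u ∈ SUhIn (ringOfInt K) := by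
    intro x hx
    have := conj_congr_mem K u⁻¹ ud' ud hu' (by rw [inv_inv]; exact hu) hd' hd hx
    simpa [inv_inv] using this
  have hH1 : CongrSub K (n ^ 2) ≤
      Subgroup.map (MulAut.conj u).toMonoidHom (SUhIn (ringOfInt K)) := by
    intro x hx
    refine ⟨u⁻¹ * x * u, hcu' x hx, ?_⟩
    show u * (u⁻¹ * x * u) * u⁻¹ = x
    group
  have hH2 : Subgroup.map (MulAut.conj u).toMonoidHom (CongrSub K (n ^ 2)) ≤
      SUhIn (ringOfInt K) := by
    rintro _ ⟨x, hx, rfl⟩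
    exact hcu x hx
  constructor
  · have hle : CongrSub K (n ^ 2) ≤
        Subgroup.map (MulAut.conj u).toMonoidHom (SUhIn (ringOfInt K)) ⊓ SUhIn (ringOfInt K) :=
      le_inf hH1 (CongrSub_le K _)
    have hd2 := Subgroup.relIndex_dvd_of_le_left (SUhIn (ringOfInt K)) hle
    rw [Subgroup.inf_relIndex_right] at hd2
    exact fun hz => hrel (Nat.eq_zero_of_zero_dvd (hz ▸ hd2))
  · have hrelm : (Subgroup.map (MulAut.conj u).toMonoidHom (CongrSub K (n ^ 2))).relIndex
        (Subgroup.map (MulAut.conj u).toMonoidHom (SUhIn (ringOfInt K))) ≠ 0 :=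
      relindex_map_ne_zero _ hrel
    have hle : Subgroup.map (MulAut.conj u).toMonoidHom (CongrSub K (n ^ 2)) ≤
        SUhIn (ringOfInt K) ⊓ Subgroup.map (MulAut.conj u).toMonoidHom (SUhIn (ringOfInt K)) :=
      le_inf hH2 (Subgroup.map_mono (CongrSub_le K _))
    have hd2 := Subgroup.relIndex_dvd_of_le_left
      (Subgroup.map (MulAut.conj u).toMonoidHom (SUhIn (ringOfInt K))) hle
    rw [Subgroup.inf_relIndex_right] at hd2
    exact fun hz => hrelm (Nat.eq_zero_of_zero_dvd (hz ▸ hd2))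

end Upstairs

section StabConj

lemma stabPSU_conj (γ : PSUhGrp) (p : ProjC2) :
    Subgroup.map (MulAut.conj γ).toMonoidHom (stabPSU p) = stabPSU (pactQ γ p) := by
  ext x
  constructor
  · rintro ⟨y, hy, rfl⟩
    have hy' : pactQ y p = p := hy
    show pactQ (γ * y * γ⁻¹) (pactQ γ p) = pactQ γ p
    rw [← pactQ_mul, inv_mul_cancel_right, pactQ_mul, hy']
  · intro hx
    have hx' : pactQ x (pactQ γ p) = pactQ γ p := hx
    refine ⟨γ⁻¹ * x * γ, ?_, ?_⟩
    · show pactQ (γ⁻¹ * x * γ) p = p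
      calc pactQ (γ⁻¹ * x * γ) p = pactQ γ⁻¹ (pactQ x (pactQ γ p)) := by
            rw [pactQ_mul, pactQ_mul]
        _ = pactQ γ⁻¹ (pactQ γ p) := by rw [hx']
        _ = p := by rw [← pactQ_mul, inv_mul_cancel, pactQ_one]
    · show γ * (γ⁻¹ * x * γ) * γ⁻¹ = x
      group

lemma hform_diagonal (e : Fin 3 → ℂ) (h02 : e 0 * conj (e 2) = 1) (h1 : e 1 * conj (e 1) = 1)
    (z : Fin 3 → ℂ) : hform ((Matrix.diagonal e).mulVec z) = hform z := by
  have h20 : e 2 * conj (e 0) = 1 := by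
    have hcc := congrArg (starRingEnd ℂ) h02
    rw [_root_.map_mul, _root_.map_one, Complex.conj_conj] at hcc
    linear_combination hcc
  unfold hform
  rw [Matrix.mulVec_diagonal, Matrix.mulVec_diagonal, Matrix.mulVec_diagonal]
  congr 1
  simp only [_root_.map_mul]
  linear_combination (-(z 0 * conj (z 2))) * h02 + (-(z 2 * conj (z 0))) * h20 +
    (z 1 * conj (z 1)) * h1

end StabConj


/-- If `D' = D·|α|²` for some `α ∈ O_K`, then `Γ_{K,D}` and `Γ_{K,D'}` are commensurable
up to conjugacy in `PSU_h(K)`. -/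
theorem stmt_8 (K : IntermediateField ℚ ℂ) (hK : IsImagQuad K)
    (D D' : ℕ) (hD : 0 < D) (hD' : 0 < D') (α : ℂ) (hα : α ∈ ringOfInt K)
    (h : (D' : ℝ) = (D : ℝ) * Complex.normSq α) :
    ∃ γ ∈ PSUhRat K,
      Subgroup.Commensurable (Subgroup.map (MulAut.conj γ).toMonoidHom (GammaKD K D'))
        (GammaKD K D) := by
  obtain ⟨hK2, -⟩ := hK
  obtain ⟨hαint, hαK⟩ := mem_ringOfInt.mp hα
  set b : ℂ := conj α with hb
  have hD'pos : (0:ℝ) < (D' : ℝ) := by exact_mod_cast hD'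
  have hns : Complex.normSq α ≠ 0 := by
    intro h0
    rw [h0, mul_zero] at h
    exact (ne_of_gt hD'pos) h
  have hα0 : α ≠ 0 := fun h0 => hns (by simp [h0])
  have hb0 : b ≠ 0 := by
    rw [hb]
    simpa using hα0
  have hbK : b ∈ K := conj_mem_field K hK2 hαK
  have hbR : b ∈ ringOfInt K := mem_ringOfInt.mpr ⟨conj_mem_intClosure hαint, hbK⟩
  have hDc : (D : ℂ) ≠ 0 := Nat.cast_ne_zero.mpr hD.ne'
  have hE : (D : ℂ) * (α * b) = (D' : ℂ) := by
    rw [hb, Complex.mul_conj]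
    calc (D : ℂ) * ((Complex.normSq α : ℝ) : ℂ)
        = (((D : ℝ) * Complex.normSq α : ℝ) : ℂ) := by push_cast; ring
      _ = ((D' : ℝ) : ℂ) := by rw [← h]
      _ = (D' : ℂ) := by push_cast; rfl
  -- find the natural number `n = α * conj α`
  have hint : IsIntegral ℤ (α * b) := hαint.mul (conj_mem_intClosure hαint)
  have hqeq : algebraMap ℚ ℂ ((D' : ℚ) / (D : ℚ)) = α * b := by
    rw [eq_comm, map_div₀, map_natCast, map_natCast, eq_div_iff hDc]
    linear_combination hE
  have hqint : IsIntegral ℤ ((D' : ℚ) / (D : ℚ)) := by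
    rw [← isIntegral_algebraMap_iff (algebraMap ℚ ℂ).injective, hqeq]
    exact hint
  obtain ⟨m, hm⟩ := IsIntegrallyClosed.isIntegral_iff.mp hqint
  have hmq : (m : ℚ) = (D' : ℚ) / (D : ℚ) := hm
  have hmpos : 0 < m := by
    have : (0 : ℚ) < (m : ℚ) := by
      rw [hmq]
      apply div_pos
      · exact_mod_cast hD'
      · exact_mod_cast hD
    exact_mod_cast this
  set n : ℕ := m.toNat with hndef
  have hn0 : n ≠ 0 := by
    simp [hndef, Int.toNat_eq_zero]
    omega
  have hn : (n : ℂ) = α * b := by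
    have h1 : ((n : ℤ) : ℚ) = (m : ℚ) := by
      rw [hndef, Int.toNat_of_nonneg hmpos.le]
    have h2 : ((n : ℚ) : ℂ) = algebraMap ℚ ℂ ((D' : ℚ) / (D : ℚ)) := by
      rw [show ((D' : ℚ) / (D : ℚ)) = (m : ℚ) from hmq.symm, ← h1]
      push_cast
      rfl
    rw [← hqeq]
    exact_mod_cast h2
  -- the diagonal matrices
  set d : Fin 3 → ℂ := ![α⁻¹, α * b⁻¹, b] with hdv
  set d' : Fin 3 → ℂ := ![α, b * α⁻¹, b⁻¹] with hd'v
  have hdet : (Matrix.diagonal d).det = 1 := by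
    rw [Matrix.det_diagonal, Fin.prod_univ_three]
    simp only [hdv, Matrix.cons_val_zero, Matrix.cons_val_one, Matrix.head_cons,
      Matrix.cons_val_two, Matrix.tail_cons]
    field_simp
  have hdet' : (Matrix.diagonal d').det = 1 := by
    rw [Matrix.det_diagonal, Fin.prod_univ_three]
    simp only [hd'v, Matrix.cons_val_zero, Matrix.cons_val_one, Matrix.head_cons,
      Matrix.cons_val_two, Matrix.tail_cons]
    field_simp
  have hconjb : conj b = α := by rw [hb, Complex.conj_conj]
  have hgSU : (⟨Matrix.diagonal d, hdet⟩ : SL3C) ∈ SUh := by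
    intro z
    refine hform_diagonal d ?_ ?_ z
    · show α⁻¹ * conj b = 1
      rw [hconjb]
      field_simp
    · show (α * b⁻¹) * conj (α * b⁻¹) = 1
      rw [_root_.map_mul, _root_.map_inv₀, hconjb, ← hb]
      field_simp
  have hgSU' : (⟨Matrix.diagonal d', hdet'⟩ : SL3C) ∈ SUh := by
    intro z
    refine hform_diagonal d' ?_ ?_ z
    · show α * conj b⁻¹ = 1
      rw [_root_.map_inv₀, hconjb]
      field_simp
    · show (b * α⁻¹) * conj (b * α⁻¹) = 1
      rw [_root_.map_mul, _root_.map_inv₀, hconjb, ← hb]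
      field_simp
  set gS : SUh := ⟨⟨Matrix.diagonal d, hdet⟩, hgSU⟩ with hgSdef
  set gS' : SUh := ⟨⟨Matrix.diagonal d', hdet'⟩, hgSU'⟩ with hgS'def
  have hgg' : gS * gS' = 1 := by
    apply Subtype.ext
    apply Subtype.ext
    show Matrix.diagonal d * Matrix.diagonal d' = (1 : Matrix (Fin 3) (Fin 3) ℂ)
    have hfun : d * d' = 1 := by
      funext i
      fin_cases i
      · show α⁻¹ * α = 1
        field_simp
      · show (α * b⁻¹) * (b * α⁻¹) = 1
        field_simp
      · show b * b⁻¹ = 1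
        field_simp
    rw [Matrix.diagonal_mul_diagonal,
      show (fun i => d i * d' i) = d * d' from rfl, hfun]
    exact Matrix.diagonal_one
  have hginv : gS⁻¹ = gS' := inv_eq_of_mul_eq_one_right hgg'
  have hu : matOf gS = Matrix.diagonal d := rfl
  have hu' : matOf gS⁻¹ = Matrix.diagonal d' := by rw [hginv]
  -- n-scaled entries are integral
  have hαR : α ∈ ringOfInt K := hα
  have hdm : ∀ i, (n : ℂ) * d i ∈ ringOfInt K := by
    intro i
    fin_cases i
    · show (n : ℂ) * d 0 ∈ ringOfInt K
      have he : (n : ℂ) * d 0 = b := by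
        show (n : ℂ) * α⁻¹ = b
        rw [hn]
        field_simp
      rw [he]; exact hbR
    · show (n : ℂ) * d 1 ∈ ringOfInt K
      have he : (n : ℂ) * d 1 = α * α := by
        show (n : ℂ) * (α * b⁻¹) = α * α
        rw [hn]
        field_simp
      rw [he]; exact Subring.mul_mem _ hαR hαR
    · show (n : ℂ) * d 2 ∈ ringOfInt K
      have he : (n : ℂ) * d 2 = α * b * b := by
        show (n : ℂ) * b = α * b * b
        rw [hn]
      rw [he]; exact Subring.mul_mem _ (Subring.mul_mem _ hαR hbR) hbR
  have hd'm : ∀ i, (n : ℂ) * d' i ∈ ringOfInt K := by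
    intro i
    fin_cases i
    · show (n : ℂ) * d' 0 ∈ ringOfInt K
      have he : (n : ℂ) * d' 0 = α * b * α := by
        show (n : ℂ) * α = α * b * α
        rw [hn]
      rw [he]; exact Subring.mul_mem _ (Subring.mul_mem _ hαR hbR) hαR
    · show (n : ℂ) * d' 1 ∈ ringOfInt K
      have he : (n : ℂ) * d' 1 = b * b := by
        show (n : ℂ) * (b * α⁻¹) = b * b
        rw [hn]
        field_simp
      rw [he]; exact Subring.mul_mem _ hbR hbR
    · show (n : ℂ) * d' 2 ∈ ringOfInt K
      have he : (n : ℂ) * d' 2 = α := by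
        show (n : ℂ) * b⁻¹ = α
        rw [hn]
        field_simp
      rw [he]; exact hαR
  -- γ and its membership
  set γ : PSUhGrp := (QuotientGroup.mk' U3) gS with hγdef
  have hgRat : gS ∈ SUhIn K.toSubalgebra.toSubring := by
    intro i j
    show matOf gS i j ∈ K.toSubalgebra.toSubring
    rw [hu, Matrix.diagonal_apply]
    have hdK : ∀ k, d k ∈ K := by
      intro k
      fin_cases k
      · show α⁻¹ ∈ K
        exact K.inv_mem hαK
      · show α * b⁻¹ ∈ K
        exact K.mul_mem hαK (K.inv_mem hbK)
      · show b ∈ K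
        exact hbK
    split
    · exact hdK i
    · exact Subring.zero_mem _
  have hγmem : γ ∈ PSUhRat K := Subgroup.mem_map_of_mem _ hgRat
  -- γ moves the point [-D':0:1] to [-D:0:1]
  have hpact : pactQ γ (ptD D') = ptD D := by
    have h1 : pactQ γ (ptD D') = pact gS (ptD D') := rfl
    rw [h1]
    unfold ptD
    rw [pact_mk, Projectivization.mk_eq_mk_iff]
    refine ⟨Units.mk0 b hb0, ?_⟩
    funext i
    fin_cases i
    · show b * (-(D : ℂ)) = ((gS : SL3C) : Matrix (Fin 3) (Fin 3) ℂ).mulVec ![-(D' : ℂ), 0, 1] 0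
      rw [show ((gS : SL3C) : Matrix (Fin 3) (Fin 3) ℂ) = Matrix.diagonal d from rfl,
        Matrix.mulVec_diagonal]
      show b * (-(D : ℂ)) = α⁻¹ * (-(D' : ℂ))
      rw [← hE, eq_inv_mul_iff_mul_eq₀ hα0]
      ring
    · show b * 0 = ((gS : SL3C) : Matrix (Fin 3) (Fin 3) ℂ).mulVec ![-(D' : ℂ), 0, 1] 1
      rw [show ((gS : SL3C) : Matrix (Fin 3) (Fin 3) ℂ) = Matrix.diagonal d from rfl,
        Matrix.mulVec_diagonal]
      show b * 0 = (α * b⁻¹) * 0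
      ring
    · show b * 1 = ((gS : SL3C) : Matrix (Fin 3) (Fin 3) ℂ).mulVec ![-(D' : ℂ), 0, 1] 2
      rw [show ((gS : SL3C) : Matrix (Fin 3) (Fin 3) ℂ) = Matrix.diagonal d from rfl,
        Matrix.mulVec_diagonal]
      show b * 1 = b * 1
      rfl
  -- commensurability upstairs and downstairs
  have hcomm1 : Subgroup.Commensurable
      (Subgroup.map (MulAut.conj gS).toMonoidHom (SUhIn (ringOfInt K)))
      (SUhIn (ringOfInt K)) :=
    commensurable_conj_SUhIn K hK2 gS d d' hu hu' n hn0 hdm hd'm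
  have hcompose : (QuotientGroup.mk' U3).comp (MulAut.conj gS).toMonoidHom
      = (MulAut.conj γ).toMonoidHom.comp (QuotientGroup.mk' U3) := by
    ext x
    rfl
  have hcomm2 : Subgroup.Commensurable (Subgroup.map (MulAut.conj γ).toMonoidHom (GammaK K))
      (GammaK K) := by
    have hmapped := commensurable_map (QuotientGroup.mk' U3) hcomm1
    rw [Subgroup.map_map, hcompose, ← Subgroup.map_map] at hmapped
    exact hmapped
  refine ⟨γ, hγmem, ?_⟩
  show Subgroup.Commensurable
    (Subgroup.map (MulAut.conj γ).toMonoidHom (GammaK K ⊓ stabPSU (ptD D')))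
    (GammaK K ⊓ stabPSU (ptD D))
  rw [Subgroup.map_inf _ _ _ (MulAut.conj γ).injective, stabPSU_conj γ (ptD D'), hpact]
  exact commensurable_inf _ hcomm2
end
end

section
/- Let z₀, z₁, z₂ ∈ O_K be relatively prime with D = h(z₀,z₁,z₂) a positive integer. Then there exists γ ∈ PSU_h(K) such that γ·[z₀:z₁:z₂] = [−2D:0:1] in ℙ²(ℂ). -/
open scoped ComplexConjugate Quaternion TensorProduct
open Matrix

noncomputable section

lemma hform_eq_of {w z : Fin 3 → ℂ}
    (h : -(w 0 * conj (w 2)) - w 2 * conj (w 0) + w 1 * conj (w 1)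
       = -(z 0 * conj (z 2)) - z 2 * conj (z 0) + z 1 * conj (z 1)) :
    hform w = hform z := congrArg Complex.re h

def Emat (r s : ℂ) : Matrix (Fin 3) (Fin 3) ℂ := !![1, conj r, s; 0, 1, r; 0, 0, 1]

lemma Emat_det (r s : ℂ) : (Emat r s).det = 1 := by
  simp [Emat, Matrix.det_fin_three, Matrix.vecHead, Matrix.vecTail]

lemma Emat_mulVec (r s : ℂ) (z : Fin 3 → ℂ) :
    (Emat r s).mulVec z = ![z 0 + conj r * z 1 + s * z 2, z 1 + r * z 2, z 2] := by
  funext i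
  fin_cases i <;>
    simp [Emat, Matrix.mulVec, dotProduct, Fin.sum_univ_three] <;> ring

lemma Emat_h (r s : ℂ) (hs : s + conj s = r * conj r) (z : Fin 3 → ℂ) :
    hform ((Emat r s).mulVec z) = hform z := by
  rw [Emat_mulVec]
  apply hform_eq_of
  simp only [Matrix.cons_val_zero, Matrix.cons_val_one, Matrix.head_cons, Matrix.cons_val_two,
    Matrix.tail_cons, map_add, _root_.map_mul, map_sub, map_neg, Complex.conj_conj]
  linear_combination (-(z 2 * conj (z 2))) * hs

def Fmat (r s : ℂ) : Matrix (Fin 3) (Fin 3) ℂ := !![1, 0, 0; r, 1, 0; s, conj r, 1]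

lemma Fmat_det (r s : ℂ) : (Fmat r s).det = 1 := by
  simp [Fmat, Matrix.det_fin_three, Matrix.vecHead, Matrix.vecTail]

lemma Fmat_mulVec (r s : ℂ) (z : Fin 3 → ℂ) :
    (Fmat r s).mulVec z = ![z 0, r * z 0 + z 1, s * z 0 + conj r * z 1 + z 2] := by
  funext i
  fin_cases i <;>
    simp [Fmat, Matrix.mulVec, dotProduct, Fin.sum_univ_three]

lemma Fmat_h (r s : ℂ) (hs : s + conj s = r * conj r) (z : Fin 3 → ℂ) :
    hform ((Fmat r s).mulVec z) = hform z := by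
  rw [Fmat_mulVec]
  apply hform_eq_of
  simp only [Matrix.cons_val_zero, Matrix.cons_val_one, Matrix.head_cons, Matrix.cons_val_two,
    Matrix.tail_cons, map_add, _root_.map_mul, map_sub, map_neg, Complex.conj_conj]
  linear_combination (-(z 0 * conj (z 0))) * hs

def Dmat (a : ℂ) : Matrix (Fin 3) (Fin 3) ℂ := !![a, 0, 0; 0, conj a / a, 0; 0, 0, (conj a)⁻¹]

lemma conj_ne_zero {a : ℂ} (ha : a ≠ 0) : conj a ≠ 0 := by
  simpa using ha

lemma Dmat_det (a : ℂ) (ha : a ≠ 0) : (Dmat a).det = 1 := by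
  have ha' := conj_ne_zero ha
  simp [Dmat, Matrix.det_fin_three, Matrix.vecHead, Matrix.vecTail]
  field_simp

lemma Dmat_mulVec (a : ℂ) (z : Fin 3 → ℂ) :
    (Dmat a).mulVec z = ![a * z 0, (conj a / a) * z 1, (conj a)⁻¹ * z 2] := by
  funext i
  fin_cases i <;>
    simp [Dmat, Matrix.mulVec, dotProduct, Fin.sum_univ_three]

lemma Dmat_h (a : ℂ) (ha : a ≠ 0) (z : Fin 3 → ℂ) :
    hform ((Dmat a).mulVec z) = hform z := by
  have ha' := conj_ne_zero ha
  rw [Dmat_mulVec]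
  apply hform_eq_of
  simp only [Matrix.cons_val_zero, Matrix.cons_val_one, Matrix.head_cons, Matrix.cons_val_two,
    Matrix.tail_cons, map_add, _root_.map_mul, map_inv₀, map_div₀, Complex.conj_conj]
  field_simp

def Smat : Matrix (Fin 3) (Fin 3) ℂ := !![0, 0, 1; 0, -1, 0; 1, 0, 0]

lemma Smat_det : Smat.det = 1 := by
  simp [Smat, Matrix.det_fin_three, Matrix.vecHead, Matrix.vecTail]

lemma Smat_mulVec (z : Fin 3 → ℂ) : Smat.mulVec z = ![z 2, -z 1, z 0] := by
  funext i
  fin_cases i <;>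
    simp [Smat, Matrix.mulVec, dotProduct, Fin.sum_univ_three]

lemma Smat_h (z : Fin 3 → ℂ) : hform (Smat.mulVec z) = hform z := by
  rw [Smat_mulVec]
  apply hform_eq_of
  simp only [Matrix.cons_val_zero, Matrix.cons_val_one, Matrix.head_cons, Matrix.cons_val_two,
    Matrix.tail_cons, map_neg]
  ring

def mkSU (M : Matrix (Fin 3) (Fin 3) ℂ) (h1 : M.det = 1)
    (h2 : ∀ z, hform (M.mulVec z) = hform z) : SUh := ⟨⟨M, h1⟩, h2⟩

lemma mkSU_coe (M : Matrix (Fin 3) (Fin 3) ℂ) (h1) (h2) :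
    (((mkSU M h1 h2 : SUh) : SL3C) : Matrix (Fin 3) (Fin 3) ℂ) = M := rfl

lemma mem_SUhIn_s9 {K : IntermediateField ℚ ℂ} {g : SUh}
    (h : ∀ i j, (((g : SUh) : SL3C) : Matrix (Fin 3) (Fin 3) ℂ) i j ∈ K) :
    g ∈ SUhIn K.toSubalgebra.toSubring := h

def conjQ : ℂ →ₐ[ℚ] ℂ := Complex.conjAe.toAlgHom.restrictScalars ℚ

lemma conjQ_apply (x : ℂ) : conjQ x = conj x := rfl

lemma conj_mem {K : IntermediateField ℚ ℂ} (hK : IsImagQuad K) {x : ℂ} (hx : x ∈ K) :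
    (conj x : ℂ) ∈ K := by
  by_cases hcx : conj x = x
  · rwa [hcx]
  haveI : FiniteDimensional ℚ K := FiniteDimensional.of_finrank_eq_succ hK.1
  set y : K := ⟨x, hx⟩ with hy
  have hint : IsIntegral ℚ y := IsIntegral.of_finite ℚ y
  set p := minpoly ℚ y with hp
  have hdeg : p.natDegree ≤ 2 := hK.1 ▸ minpoly.natDegree_le y
  have hmon : p.Monic := minpoly.monic hint
  have haev : (Polynomial.aeval x) p = 0 := by
    have := minpoly.aeval ℚ y
    have h2 := Polynomial.aeval_algHom_apply K.val y p
    rw [this, map_zero] at h2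
    exact h2
  have haev2 : (Polynomial.aeval (conj x)) p = 0 := by
    have := Polynomial.aeval_algHom_apply conjQ x p
    rw [haev, map_zero] at this
    simpa [conjQ_apply] using this
  have hd2 : p.natDegree = 2 := by
    rcases Nat.lt_or_ge p.natDegree 2 with h | h
    · exfalso
      have h1 : p.natDegree ≤ 1 := Nat.lt_succ_iff.mp h
      have hXC := Polynomial.eq_X_add_C_of_natDegree_le_one h1
      rw [hXC] at haev haev2
      simp only [map_add, _root_.map_mul, Polynomial.aeval_X, Polynomial.aeval_C] at haev haev2
      by_cases hc1 : (p.coeff 1 : ℚ) = 0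
      · rw [hc1] at hXC
        simp at hXC
        have hd0 : p.natDegree = 0 := by rw [hXC]; simp
        have hp1 : p = 1 := hmon.natDegree_eq_zero.mp hd0
        rw [hp1] at haev; norm_num [Polynomial.coeff_one] at haev
      · apply hcx
        have hc1' : ((p.coeff 1 : ℚ) : ℂ) ≠ 0 := by exact_mod_cast hc1
        simp only [eq_ratCast] at haev haev2
        have hz : ((p.coeff 1 : ℚ) : ℂ) * (conj x - x) = 0 := by
          linear_combination haev2 - haev
        have := (mul_eq_zero.mp hz).resolve_left hc1'
        linear_combination this
    · omega
  have hb : ∀ t : ℂ, (Polynomial.aeval t) p = t ^ 2 + (p.coeff 1 : ℂ) * t + (p.coeff 0 : ℂ) := by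
    intro t
    rw [Polynomial.aeval_eq_sum_range, hd2]
    have hlead : p.coeff 2 = 1 := by
      have := hmon.coeff_natDegree; rwa [hd2] at this
    simp [Finset.sum_range_succ, hlead, Rat.smul_def]
    ring
  rw [hb] at haev haev2
  have key : conj x = -(p.coeff 1 : ℂ) - x := by
    have hsub : (conj x - x) * (conj x + x + (p.coeff 1 : ℂ)) = 0 := by
      linear_combination haev2 - haev
    rcases mul_eq_zero.mp hsub with h | h
    · exact absurd (by linear_combination h) hcx
    · linear_combination h
  rw [key]
  have hbmem : ((p.coeff 1 : ℚ) : ℂ) ∈ K := by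
    simpa using K.algebraMap_mem (p.coeff 1)
  exact sub_mem (neg_mem hbmem) hx

lemma key2 {K : IntermediateField ℚ ℂ} (hK : IsImagQuad K) (z : Fin 3 → ℂ)
    (hzK : ∀ i, z i ∈ K) (hz2 : z 2 ≠ 0) (D : ℕ) (hh : hform z = D) :
    ∃ g : SUh, g ∈ SUhIn K.toSubalgebra.toSubring ∧
      ((g : SL3C) : Matrix (Fin 3) (Fin 3) ℂ).mulVec z = ![-(D : ℂ), 0, 1/2] := by
  classical
  have h2K : (2 : ℂ) ∈ K := by
    have := K.algebraMap_mem (2 : ℚ)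
    rw [map_ofNat] at this
    exact this
  have hDK : ((D : ℕ) : ℂ) ∈ K := by
    have := K.algebraMap_mem ((D : ℕ) : ℚ)
    rw [map_natCast] at this
    exact this
  set r : ℂ := -z 1 / z 2 with hr
  set s : ℂ := r * conj r / 2 with hsdef
  have hs : s + conj s = r * conj r := by
    rw [hsdef]
    simp only [map_div₀, _root_.map_mul, Complex.conj_conj, map_ofNat]
    ring
  have hrK : r ∈ K := div_mem (neg_mem (hzK 1)) (hzK 2)
  have hsK : s ∈ K := div_mem (mul_mem hrK (conj_mem hK hrK)) h2K
  set g1 : SUh := mkSU (Emat r s) (Emat_det r s) (Emat_h r s hs) with hg1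
  set x1 : ℂ := z 0 + conj r * z 1 + s * z 2 with hx1
  have hv1 : (Emat r s).mulVec z = ![x1, 0, z 2] := by
    rw [Emat_mulVec]
    funext i
    fin_cases i <;> simp [hx1, hr]
    field_simp
    ring
  set a : ℂ := 2 * conj (z 2) with hadef
  have ha : a ≠ 0 := by
    simp [hadef, conj_ne_zero hz2]
  have haK : a ∈ K := mul_mem h2K (conj_mem hK (hzK 2))
  have hcaK : (conj a : ℂ) ∈ K := conj_mem hK haK
  set g2 : SUh := mkSU (Dmat a) (Dmat_det a ha) (Dmat_h a ha) with hg2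
  set x : ℂ := a * x1 with hx
  have hca : conj a = 2 * z 2 := by
    simp [hadef, _root_.map_mul, Complex.conj_conj, map_ofNat]
  have hv2 : (Dmat a).mulVec ![x1, 0, z 2] = ![x, 0, 1/2] := by
    rw [Dmat_mulVec]
    funext i
    fin_cases i <;> simp [hx, hca]
    field_simp
  have hxK : x ∈ K := mul_mem haK
    (add_mem (add_mem (hzK 0) (mul_mem (conj_mem hK hrK) (hzK 1))) (mul_mem hsK (hzK 2)))
  have hh2 : hform ![x, 0, 1/2] = D := by
    rw [← hv2, ← hv1, Dmat_h a ha, Emat_h r s hs, hh]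
  have hre : x + conj x = -2 * (D : ℂ) := by
    have h1 : x.re = -D := by
      have := hh2
      simp [hform, Complex.add_re, Complex.neg_re, Complex.mul_re] at this
      nlinarith [this]
    rw [Complex.add_conj, h1]
    push_cast
    ring
  set s3 : ℂ := -2 * x - 2 * (D : ℂ) with hs3def
  have hs3 : s3 + conj s3 = (0 : ℂ) * conj 0 := by
    simp only [hs3def, map_sub, _root_.map_mul, map_neg, map_ofNat, map_natCast]
    linear_combination -2 * hre
  have hs3K : s3 ∈ K := sub_mem (mul_mem (neg_mem h2K) hxK) (mul_mem h2K hDK)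
  set g3 : SUh := mkSU (Emat 0 s3) (Emat_det 0 s3) (Emat_h 0 s3 hs3) with hg3
  have hv3 : (Emat 0 s3).mulVec ![x, 0, 1/2] = ![-(D : ℂ), 0, 1/2] := by
    rw [Emat_mulVec]
    funext i
    fin_cases i <;> simp [hs3def] <;> ring
  refine ⟨g3 * g2 * g1, ?_, ?_⟩
  · refine mul_mem (mul_mem (mem_SUhIn_s9 ?_) (mem_SUhIn_s9 ?_)) (mem_SUhIn_s9 ?_)
    · intro i j
      fin_cases i <;> fin_cases j <;>
        simp [hg3, mkSU_coe, Emat] <;>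
        first
          | exact K.one_mem
          | exact K.zero_mem
          | exact hs3K
          | exact conj_mem hK K.zero_mem
    · intro i j
      fin_cases i <;> fin_cases j <;>
        simp [hg2, mkSU_coe, Dmat] <;>
        first
          | exact K.one_mem
          | exact K.zero_mem
          | exact haK
          | exact div_mem hcaK haK
          | exact inv_mem hcaK
          | exact hcaK
    · intro i j
      fin_cases i <;> fin_cases j <;>
        simp [hg1, mkSU_coe, Emat] <;>
        first
          | exact K.one_mem
          | exact K.zero_mem
          | exact hsK
          | exact hrK
          | exact conj_mem hK hrK
  · push_cast [Subgroup.coe_mul, Matrix.SpecialLinearGroup.coe_mul]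
    rw [mkSU_coe, mkSU_coe, mkSU_coe, ← Matrix.mulVec_mulVec, ← Matrix.mulVec_mulVec,
      hv1, hv2, hv3]

lemma key {K : IntermediateField ℚ ℂ} (hK : IsImagQuad K) (z : Fin 3 → ℂ)
    (hzK : ∀ i, z i ∈ K) (hz : z ≠ 0) (D : ℕ) (hh : hform z = D) :
    ∃ g : SUh, g ∈ SUhIn K.toSubalgebra.toSubring ∧
      ((g : SL3C) : Matrix (Fin 3) (Fin 3) ℂ).mulVec z = ![-(D : ℂ), 0, 1/2] := by
  by_cases hz2 : z 2 ≠ 0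
  · exact key2 hK z hzK hz2 D hh
  push_neg at hz2
  by_cases hz0 : z 0 ≠ 0
  · -- swap via Smat
    set g0 : SUh := mkSU Smat Smat_det Smat_h with hg0
    set w : Fin 3 → ℂ := ![z 2, -z 1, z 0] with hw
    have hwz : Smat.mulVec z = w := Smat_mulVec z
    have hwK : ∀ i, w i ∈ K := by
      intro i; fin_cases i <;> simp [hw] <;> first | exact hzK 2 | exact hzK 1 | exact hzK 0
    have hw2 : w 2 ≠ 0 := by simpa [hw] using hz0
    have hwh : hform w = D := by rw [← hwz, Smat_h, hh]
    obtain ⟨g, hgmem, hgv⟩ := key2 hK w hwK hw2 D hwh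
    refine ⟨g * g0, mul_mem hgmem (mem_SUhIn_s9 ?_), ?_⟩
    · intro i j
      fin_cases i <;> fin_cases j <;>
        simp [hg0, mkSU_coe, Smat] <;>
        first | exact K.one_mem | exact K.zero_mem | exact neg_mem K.one_mem
    · push_cast [Subgroup.coe_mul, Matrix.SpecialLinearGroup.coe_mul]
      rw [mkSU_coe, ← Matrix.mulVec_mulVec, hwz, hgv]
  · -- z 0 = 0, z 2 = 0, so z 1 ≠ 0
    push_neg at hz0
    have hz1 : z 1 ≠ 0 := by
      intro h1
      apply hz
      funext i; fin_cases i <;> assumption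
    have hsF : (1/2 : ℂ) + conj (1/2 : ℂ) = (1 : ℂ) * conj 1 := by
      simp only [map_div₀, _root_.map_one, map_ofNat]
      norm_num
    set g0 : SUh := mkSU (Fmat 1 (1/2)) (Fmat_det 1 (1/2)) (Fmat_h 1 (1/2) hsF) with hg0
    set w : Fin 3 → ℂ := ![0, z 1, z 1] with hw
    have hwz : (Fmat 1 (1/2)).mulVec z = w := by
      rw [Fmat_mulVec]
      funext i
      fin_cases i <;> simp [hw, hz0, hz2]
    have hwK : ∀ i, w i ∈ K := by
      intro i; fin_cases i <;> simp [hw] <;> first | exact K.zero_mem | exact hzK 1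
    have hw2 : w 2 ≠ 0 := by simpa [hw] using hz1
    have hwh : hform w = D := by rw [← hwz, Fmat_h 1 (1/2) hsF, hh]
    obtain ⟨g, hgmem, hgv⟩ := key2 hK w hwK hw2 D hwh
    have h2K : (2 : ℂ) ∈ K := by
      have := K.algebraMap_mem (2 : ℚ)
      rw [map_ofNat] at this
      exact this
    refine ⟨g * g0, mul_mem hgmem (mem_SUhIn_s9 ?_), ?_⟩
    · intro i j
      fin_cases i <;> fin_cases j <;>
        simp [hg0, mkSU_coe, Fmat] <;>
        first
          | exact K.one_mem
          | exact K.zero_mem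
          | exact h2K
          | exact div_mem K.one_mem (by
              have := K.algebraMap_mem (2 : ℚ)
              norm_num at this
              exact_mod_cast this)
          | exact conj_mem hK K.one_mem
    · push_cast [Subgroup.coe_mul, Matrix.SpecialLinearGroup.coe_mul]
      rw [mkSU_coe, ← Matrix.mulVec_mulVec, hwz, hgv]

/-- If `z₀, z₁, z₂ ∈ O_K` are relatively prime with `D = h(z₀,z₁,z₂)` a positive integer,
then some `γ ∈ PSU_h(K)` maps `[z₀:z₁:z₂]` to `[-2D:0:1]`. -/
theorem stmt_9 (K : IntermediateField ℚ ℂ) (hK : IsImagQuad K)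
    (z : Fin 3 → ℂ) (hzO : ∀ i, z i ∈ ringOfInt K) (hrp : RelPrimeOK K z)
    (D : ℕ) (hD : 0 < D) (hh : hform z = D) :
    ∀ hz : z ≠ 0, ∃ γ ∈ PSUhRat K,
      pactQ γ (Projectivization.mk ℂ z hz) = ptD (2 * D) := by
  intro hz
  have hzK : ∀ i, z i ∈ K := fun i => (hzO i).2
  obtain ⟨g, hgmem, hgv⟩ := key hK z hzK hz D hh
  refine ⟨QuotientGroup.mk' U3 g, Subgroup.mem_map.mpr ⟨g, hgmem, rfl⟩, ?_⟩
  have hq : pactQ (QuotientGroup.mk' U3 g) (Projectivization.mk ℂ z hz)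
      = pact g (Projectivization.mk ℂ z hz) := rfl
  rw [hq, pact_mk]
  unfold ptD
  rw [Projectivization.mk_eq_mk_iff]
  refine ⟨Units.mk0 (1/2 : ℂ) (by norm_num), ?_⟩
  rw [hgv]
  funext i
  fin_cases i <;>
    simp [Units.smul_def, Pi.smul_apply] <;> push_cast <;> ring
end
end

section
/- For all integers a > 0 > b, with A = (a,b/ℚ), the set σ_{a,b}(A(ℤ)¹) is a discrete subgroup of SU_h (for the topology induced from M₃(ℂ)), and each of its elements fixes the point [0:1:0] ∈ ℙ²(ℂ). -/
open scoped ComplexConjugate Quaternion TensorProduct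
open Matrix

noncomputable section

/-- The image of the norm-one integral quaternions under `σ_{a,b}`. -/
def sigmaImage (a b : ℤ) : Set (Matrix (Fin 3) (Fin 3) ℂ) :=
  {M | ∃ x : ℍ[ℚ, (a : ℚ), (b : ℚ)], IntQuat x ∧ qnorm (a : ℚ) (b : ℚ) x = 1 ∧
    M = sigmaMat a b x}


section Aux

variable {a b : ℤ}

lemma castA_eq (ha : 0 < a) : ((a : ℤ) : ℂ) = ((Real.sqrt (a : ℝ) : ℝ) : ℂ) ^ 2 := by
  rw [← Complex.ofReal_pow, Real.sq_sqrt (by exact_mod_cast ha.le)]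
  norm_cast

lemma castB_eq (hb : b < 0) :
    ((b : ℤ) : ℂ) = (Complex.I * ((Real.sqrt |(b : ℝ)| : ℝ) : ℂ)) ^ 2 := by
  rw [mul_pow, Complex.I_sq, ← Complex.ofReal_pow,
    Real.sq_sqrt (abs_nonneg _), abs_of_neg (by exact_mod_cast hb)]
  push_cast
  ring

set_option maxHeartbeats 1000000 in
lemma sigmaMat_one : sigmaMat a b 1 = 1 := by
  ext i j
  fin_cases i <;> fin_cases j <;>
    simp [sigmaMat, Matrix.one_fin_three, Matrix.vecHead, Matrix.vecTail]

set_option maxHeartbeats 1000000 in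
lemma sigmaMat_mul (ha : 0 < a) (hb : b < 0) (x y : ℍ[ℚ, (a : ℚ), (b : ℚ)]) :
    sigmaMat a b (x * y) = sigmaMat a b x * sigmaMat a b y := by
  have hA := castA_eq ha
  have hB := castB_eq hb
  ext i j
  fin_cases i <;> fin_cases j <;>
    simp [sigmaMat, Matrix.mul_fin_three, QuaternionAlgebra.re_mul, QuaternionAlgebra.imI_mul,
      QuaternionAlgebra.imJ_mul, QuaternionAlgebra.imK_mul] <;>
    push_cast <;> simp only [hA, hB] <;> ring

lemma IntQuat.one : IntQuat (1 : ℍ[ℚ, (a : ℚ), (b : ℚ)]) :=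
  ⟨⟨1, by simp⟩, ⟨0, by simp⟩, ⟨0, by simp⟩, ⟨0, by simp⟩⟩

lemma IntQuat.star_ {x : ℍ[ℚ, (a : ℚ), (b : ℚ)]} (hx : IntQuat x) : IntQuat (star x) := by
  obtain ⟨⟨n1, h1⟩, ⟨n2, h2⟩, ⟨n3, h3⟩, ⟨n4, h4⟩⟩ := hx
  exact ⟨⟨n1, by simp [h1]⟩, ⟨-n2, by simp [h2]⟩, ⟨-n3, by simp [h3]⟩, ⟨-n4, by simp [h4]⟩⟩

lemma IntQuat.mul {x y : ℍ[ℚ, (a : ℚ), (b : ℚ)]} (hx : IntQuat x) (hy : IntQuat y) :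
    IntQuat (x * y) := by
  obtain ⟨⟨n1, h1⟩, ⟨n2, h2⟩, ⟨n3, h3⟩, ⟨n4, h4⟩⟩ := hx
  obtain ⟨⟨m1, g1⟩, ⟨m2, g2⟩, ⟨m3, g3⟩, ⟨m4, g4⟩⟩ := hy
  refine ⟨⟨n1 * m1 + a * n2 * m2 + b * n3 * m3 - a * b * n4 * m4, ?_⟩,
      ⟨n1 * m2 + n2 * m1 - b * n3 * m4 + b * n4 * m3, ?_⟩,
      ⟨n1 * m3 + a * n2 * m4 + n3 * m1 - a * n4 * m2, ?_⟩,
      ⟨n1 * m4 + n2 * m3 - n3 * m2 + n4 * m1, ?_⟩⟩ <;>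
    simp only [QuaternionAlgebra.re_mul, QuaternionAlgebra.imI_mul,
      QuaternionAlgebra.imJ_mul, QuaternionAlgebra.imK_mul, h1, h2, h3, h4, g1, g2, g3, g4] <;>
    push_cast <;> ring

lemma qnorm_one : qnorm (a : ℚ) (b : ℚ) 1 = 1 := by
  simp [qnorm]

lemma qnorm_star (x : ℍ[ℚ, (a : ℚ), (b : ℚ)]) :
    qnorm (a : ℚ) (b : ℚ) (star x) = qnorm (a : ℚ) (b : ℚ) x := by
  simp [qnorm]

lemma mul_star_self (x : ℍ[ℚ, (a : ℚ), (b : ℚ)]) :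
    x * star x = ((qnorm (a : ℚ) (b : ℚ) x : ℚ) : ℍ[ℚ, (a : ℚ), (b : ℚ)]) := by
  rw [QuaternionAlgebra.mul_star_eq_coe]
  congr 1
  simp only [QuaternionAlgebra.re_mul, QuaternionAlgebra.re_star, QuaternionAlgebra.imI_star,
    QuaternionAlgebra.imJ_star, QuaternionAlgebra.imK_star, qnorm]
  ring

lemma mul_star_self_one {x : ℍ[ℚ, (a : ℚ), (b : ℚ)]} (hq : qnorm (a : ℚ) (b : ℚ) x = 1) :
    x * star x = 1 := by
  rw [mul_star_self, hq, QuaternionAlgebra.coe_one]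

lemma star_mul_self_one {x : ℍ[ℚ, (a : ℚ), (b : ℚ)]} (hq : qnorm (a : ℚ) (b : ℚ) x = 1) :
    star x * x = 1 := by
  rw [star_comm_self', mul_star_self_one hq]

lemma qnorm_mul_one {x y : ℍ[ℚ, (a : ℚ), (b : ℚ)]} (hx : qnorm (a : ℚ) (b : ℚ) x = 1)
    (hy : qnorm (a : ℚ) (b : ℚ) y = 1) : qnorm (a : ℚ) (b : ℚ) (x * y) = 1 := by
  have h1 : (x * y) * star (x * y) = 1 := by
    rw [StarMul.star_mul, mul_assoc, ← mul_assoc y, mul_star_self_one hy, one_mul,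
      mul_star_self_one hx]
  rw [mul_star_self] at h1
  have := congrArg QuaternionAlgebra.re h1
  simpa using this

lemma qnorm_cast {x : ℍ[ℚ, (a : ℚ), (b : ℚ)]} (hq : qnorm (a : ℚ) (b : ℚ) x = 1) :
    ((x.re : ℂ)) ^ 2 - (a : ℂ) * (x.imI : ℂ) ^ 2 - (b : ℂ) * (x.imJ : ℂ) ^ 2
      + (a : ℂ) * (b : ℂ) * (x.imK : ℂ) ^ 2 = 1 := by
  simp only [qnorm] at hq
  have := congrArg (fun t : ℚ => (t : ℂ)) hq
  push_cast at this
  linear_combination this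

set_option maxHeartbeats 1000000 in
lemma sigma_mem_SUh (ha : 0 < a) (hb : b < 0) {x : ℍ[ℚ, (a : ℚ), (b : ℚ)]}
    (hq : qnorm (a : ℚ) (b : ℚ) x = 1) : sigmaMat a b x ∈ SUhSet := by
  have hA := castA_eq ha
  have hB := castB_eq hb
  have hn := qnorm_cast hq
  simp only [hA, hB] at hn
  constructor
  · simp [sigmaMat, Matrix.det_fin_three]
    linear_combination hn
  · intro z
    unfold hform
    congr 1
    simp only [sigmaMat, Matrix.mulVec, dotProduct, Fin.sum_univ_three,
      Matrix.cons_val', Matrix.cons_val_zero, Matrix.cons_val_one, Matrix.head_cons,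
      Matrix.empty_val', Matrix.cons_val_fin_one, Matrix.head_fin_const,
      Matrix.cons_val_two, Matrix.tail_cons, Matrix.of_apply, Fin.isValue,
      _root_.map_add, map_sub, _root_.map_mul, map_neg, _root_.map_one, _root_.map_zero,
      Complex.conj_ofReal, Complex.conj_I, map_ratCast]
    linear_combination (-(z 0 * conj (z 2) + z 2 * conj (z 0))) * hn

lemma half_gap {A B : ℝ} (h1 : |A + B| < 1) (h2 : |A - B| < 1) : |A| < 1 ∧ |B| < 1 := by
  rw [abs_lt] at h1 h2
  exact ⟨abs_lt.mpr ⟨by linarith, by linarith⟩, abs_lt.mpr ⟨by linarith, by linarith⟩⟩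

lemma int_eq_of_abs_lt_one {q r : ℚ} {n m : ℤ} (hq : q = n) (hr : r = m)
    (h : |((q : ℝ)) - (r : ℝ)| < 1) : q = r := by
  subst hq hr
  have h' : |((n - m : ℤ) : ℝ)| < 1 := by push_cast; push_cast at h; convert h using 2
  have h2 : n = m := by
    by_contra hc
    have : (1 : ℤ) ≤ |n - m| := Int.one_le_abs (by omega)
    have : (1 : ℝ) ≤ |((n - m : ℤ) : ℝ)| := by
      rw [← Int.cast_abs]; exact_mod_cast this
    linarith
  simp [h2]

set_option maxHeartbeats 1000000 in
lemma sigma_gap (ha : 0 < a) (hb : b < 0) {x y : ℍ[ℚ, (a : ℚ), (b : ℚ)]}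
    (hx : IntQuat x) (hy : IntQuat y)
    (h : ∀ i j, ‖sigmaMat a b x i j - sigmaMat a b y i j‖ < 1) : x = y := by
  set u : ℝ := Real.sqrt (a : ℝ) with hu_def
  set v : ℝ := Real.sqrt |(b : ℝ)| with hv_def
  have hu1 : 1 ≤ u := Real.one_le_sqrt.mpr (by exact_mod_cast ha)
  have hv1 : 1 ≤ v := Real.one_le_sqrt.mpr (by
    rw [abs_of_neg (by exact_mod_cast hb : ((b : ℝ)) < 0)]
    have : (1 : ℤ) ≤ -b := by omega
    exact_mod_cast this)
  have hu0 : 0 < u := lt_of_lt_of_le one_pos hu1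
  have hv0 : 0 < v := lt_of_lt_of_le one_pos hv1
  have e00 := h 0 0
  have e22 := h 2 2
  have e02 := h 0 2
  have e20 := h 2 0
  rw [show sigmaMat a b x 0 0 - sigmaMat a b y 0 0 =
      ((((x.re : ℝ) - y.re) + ((x.imI : ℝ) - y.imI) * u : ℝ) : ℂ) by
    simp [sigmaMat]; push_cast; ring, Complex.norm_real, Real.norm_eq_abs] at e00
  rw [show sigmaMat a b x 2 2 - sigmaMat a b y 2 2 =
      ((((x.re : ℝ) - y.re) - ((x.imI : ℝ) - y.imI) * u : ℝ) : ℂ) by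
    simp [sigmaMat]; push_cast; ring, Complex.norm_real, Real.norm_eq_abs] at e22
  rw [show sigmaMat a b x 0 2 - sigmaMat a b y 0 2 =
      ((((x.imJ : ℝ) - y.imJ) + ((x.imK : ℝ) - y.imK) * u : ℝ) : ℂ) * (Complex.I * (v : ℂ)) by
    simp [sigmaMat]; push_cast; ring, norm_mul, norm_mul, Complex.norm_real, Real.norm_eq_abs,
    Complex.norm_I, Complex.norm_real, Real.norm_eq_abs, one_mul, abs_of_pos hv0] at e02
  rw [show sigmaMat a b x 2 0 - sigmaMat a b y 2 0 =
      ((((x.imJ : ℝ) - y.imJ) - ((x.imK : ℝ) - y.imK) * u : ℝ) : ℂ) * (Complex.I * (v : ℂ)) by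
    simp [sigmaMat]; push_cast; ring, norm_mul, norm_mul, Complex.norm_real, Real.norm_eq_abs,
    Complex.norm_I, Complex.norm_real, Real.norm_eq_abs, one_mul, abs_of_pos hv0] at e20
  have e02' : |((x.imJ : ℝ) - y.imJ) + ((x.imK : ℝ) - y.imK) * u| < 1 := by
    nlinarith [abs_nonneg (((x.imJ : ℝ) - y.imJ) + ((x.imK : ℝ) - y.imK) * u)]
  have e20' : |((x.imJ : ℝ) - y.imJ) - ((x.imK : ℝ) - y.imK) * u| < 1 := by
    nlinarith [abs_nonneg (((x.imJ : ℝ) - y.imJ) - ((x.imK : ℝ) - y.imK) * u)]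
  obtain ⟨hre, himIu⟩ := half_gap e00 e22
  obtain ⟨himJ, himKu⟩ := half_gap e02' e20'
  have himI : |(x.imI : ℝ) - y.imI| < 1 := by
    rw [abs_mul, abs_of_pos hu0] at himIu
    nlinarith [abs_nonneg ((x.imI : ℝ) - y.imI)]
  have himK : |(x.imK : ℝ) - y.imK| < 1 := by
    rw [abs_mul, abs_of_pos hu0] at himKu
    nlinarith [abs_nonneg ((x.imK : ℝ) - y.imK)]
  obtain ⟨⟨n1, h1⟩, ⟨n2, h2⟩, ⟨n3, h3⟩, ⟨n4, h4⟩⟩ := hx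
  obtain ⟨⟨m1, g1⟩, ⟨m2, g2⟩, ⟨m3, g3⟩, ⟨m4, g4⟩⟩ := hy
  exact QuaternionAlgebra.ext
    (int_eq_of_abs_lt_one h1 g1 (by push_cast at hre ⊢; convert hre using 2))
    (int_eq_of_abs_lt_one h2 g2 (by push_cast at himI ⊢; convert himI using 2))
    (int_eq_of_abs_lt_one h3 g3 (by push_cast at himJ ⊢; convert himJ using 2))
    (int_eq_of_abs_lt_one h4 g4 (by push_cast at himK ⊢; convert himK using 2))

end Aux

/-- For integers `a > 0 > b`, the set `σ_{a,b}(A(ℤ)¹)` is a discrete subgroup of `SU_h`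
(with the topology induced from `M₃(ℂ)`), and each of its elements fixes `[0:1:0]`. -/
theorem stmt_11 (a b : ℤ) (ha : 0 < a) (hb : b < 0) :
    sigmaImage a b ⊆ SUhSet ∧
    (1 : Matrix (Fin 3) (Fin 3) ℂ) ∈ sigmaImage a b ∧
    (∀ M ∈ sigmaImage a b, ∀ N ∈ sigmaImage a b, M * N ∈ sigmaImage a b) ∧
    (∀ M ∈ sigmaImage a b, ∃ N ∈ sigmaImage a b, M * N = 1 ∧ N * M = 1) ∧
    DiscreteTopology (sigmaImage a b) ∧
    (∀ M ∈ sigmaImage a b, ∃ c : ℂ,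
      M.mulVec ![0, 1, 0] = c • ![0, 1, 0]) := by
  constructor
  · rintro M ⟨x, hint, hq, rfl⟩
    exact sigma_mem_SUh ha hb hq
  refine ⟨⟨1, IntQuat.one, qnorm_one, sigmaMat_one.symm⟩, ?_, ?_, ?_, ?_⟩
  · rintro M ⟨x, hxi, hxq, rfl⟩ N ⟨y, hyi, hyq, rfl⟩
    exact ⟨x * y, hxi.mul hyi, qnorm_mul_one hxq hyq, (sigmaMat_mul ha hb x y).symm⟩
  · rintro M ⟨x, hxi, hxq, rfl⟩
    refine ⟨sigmaMat a b (star x), ⟨star x, hxi.star_, qnorm_star x ▸ hxq, rfl⟩, ?_, ?_⟩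
    · rw [← sigmaMat_mul ha hb, mul_star_self_one hxq, sigmaMat_one]
    · rw [← sigmaMat_mul ha hb, star_mul_self_one hxq, sigmaMat_one]
  · refine discreteTopology_iff_isOpen_singleton.mpr ?_
    rintro ⟨M, hM⟩
    set U : Set (Matrix (Fin 3) (Fin 3) ℂ) :=
      {N | ∀ i j, ‖N i j - M i j‖ < 1} with hU_def
    have hUopen : IsOpen U := by
      have : U = ⋂ i, ⋂ j, (fun N : Matrix (Fin 3) (Fin 3) ℂ =>
          ‖N i j - M i j‖) ⁻¹' (Set.Iio 1) := by
        ext N; simp [hU_def]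
      rw [this]
      exact isOpen_iInter_of_finite fun i => isOpen_iInter_of_finite fun j =>
        IsOpen.preimage (continuous_norm.comp
          ((continuous_id.matrix_elem i j).sub continuous_const)) isOpen_Iio
    have hset : {(⟨M, hM⟩ : sigmaImage a b)} =
        (Subtype.val : sigmaImage a b → Matrix (Fin 3) (Fin 3) ℂ) ⁻¹' U := by
      ext ⟨N, hN⟩
      simp only [Set.mem_singleton_iff, Set.mem_preimage, Subtype.mk.injEq]
      constructor
      · rintro rfl
        intro i j
        simp [hU_def]
      · intro hNU
        obtain ⟨x, hxi, hxq, rfl⟩ := hM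
        obtain ⟨y, hyi, hyq, rfl⟩ := hN
        rw [sigma_gap ha hb hyi hxi hNU]
    rw [hset]
    exact IsOpen.preimage continuous_subtype_val hUopen
  · rintro M ⟨x, hxi, hxq, rfl⟩
    refine ⟨1, ?_⟩
    ext i
    fin_cases i <;>
      simp [sigmaMat, Matrix.mulVec, dotProduct, Fin.sum_univ_three]
end
end

section
/- A matrix g ∈ SU_h fixes the point [0:1:0] ∈ ℙ²(ℂ) (i.e. g·(0,1,0) is a scalar multiple of (0,1,0)) if and only if there exist a, b, c, d ∈ ℝ and ζ ∈ ℂ with ad − bc = 1 and |ζ| = 1 such that g is the matrix with rows (ζa, 0, iζb), (0, ζ⁻², 0), (−iζc, 0, ζd). -/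
open scoped ComplexConjugate Quaternion TensorProduct
open Matrix

noncomputable section

lemma hprod_re (z w : Fin 3 → ℂ) :
    (hprod z w).re = (hform (z + w) - hform z - hform w) / 2 := by
  simp only [hprod, hform, Pi.add_apply, map_add, Complex.add_re, Complex.sub_re,
    Complex.neg_re, Complex.mul_re, Complex.add_im, Complex.sub_im, Complex.neg_im,
    Complex.mul_im, Complex.conj_re, Complex.conj_im]
  ring

lemma hprod_im (z w : Fin 3 → ℂ) :
    (hprod z w).im = (hform (z + Complex.I • w) - hform z - hform w) / 2 := by
  simp only [hprod, hform, Pi.add_apply, Pi.smul_apply, smul_eq_mul, map_add, _root_.map_mul,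
    Complex.add_re, Complex.sub_re, Complex.neg_re, Complex.mul_re, Complex.add_im,
    Complex.sub_im, Complex.neg_im, Complex.mul_im, Complex.conj_re, Complex.conj_im,
    Complex.I_re, Complex.I_im]
  ring

lemma hprod_invariant {g : Matrix (Fin 3) (Fin 3) ℂ}
    (hg : ∀ z, hform (g.mulVec z) = hform z) (z w : Fin 3 → ℂ) :
    hprod (g.mulVec z) (g.mulVec w) = hprod z w := by
  apply Complex.ext
  · rw [hprod_re, hprod_re, ← Matrix.mulVec_add, hg, hg, hg]
  · rw [hprod_im, hprod_im, ← Matrix.mulVec_smul, ← Matrix.mulVec_add, hg, hg, hg]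

lemma col_eq (g : Matrix (Fin 3) (Fin 3) ℂ) (j : Fin 3) :
    g.mulVec (fun k => if k = j then 1 else 0) = fun k => g k j := by
  funext k
  simp [Matrix.mulVec, dotProduct, Fin.sum_univ_three]

/-- A matrix `g ∈ SU_h` fixes `[0:1:0]` if and only if it has the explicit form
with rows `(ζa, 0, iζb)`, `(0, ζ⁻², 0)`, `(−iζc, 0, ζd)` where `a,b,c,d ∈ ℝ`,
`ad − bc = 1` and `|ζ| = 1`. -/
theorem stmt_12 (g : Matrix (Fin 3) (Fin 3) ℂ) (hg : g ∈ SUhSet) :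
    (∃ c : ℂ, g.mulVec ![0, 1, 0] = c • ![0, 1, 0]) ↔
    ∃ (a b c d : ℝ) (ζ : ℂ), a * d - b * c = 1 ∧ ‖ζ‖ = 1 ∧
      g = !![ζ * (a : ℂ), 0, Complex.I * ζ * (b : ℂ);
             0, (ζ ^ 2)⁻¹, 0;
             -(Complex.I * ζ * (c : ℂ)), 0, ζ * (d : ℂ)] := by
  obtain ⟨hdet, hinv⟩ := hg
  constructor
  · rintro ⟨c0, hc⟩
    have hg01 : g 0 1 = 0 := by
      have := congrFun hc 0
      simpa [Matrix.mulVec, dotProduct, Fin.sum_univ_three] using this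
    have hg21 : g 2 1 = 0 := by
      have := congrFun hc 2
      simpa [Matrix.mulVec, dotProduct, Fin.sum_univ_three] using this
    have hg11 : g 1 1 = c0 := by
      have := congrFun hc 1
      simpa [Matrix.mulVec, dotProduct, Fin.sum_univ_three] using this
    have hB : ∀ i j : Fin 3, hprod (fun k => g k i) (fun k => g k j)
        = hprod (fun k => if k = i then 1 else 0) (fun k => if k = j then 1 else 0) := by
      intro i j
      rw [← col_eq g i, ← col_eq g j]
      exact hprod_invariant hinv _ _
    have e11 : c0 * conj c0 = 1 := by
      have := hB 1 1
      simp only [hprod] at this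
      rw [hg01, hg21, hg11] at this
      simpa using this
    have hc0 : c0 ≠ 0 := by
      intro h; rw [h] at e11; simp at e11
    have e10 : g 1 0 = 0 := by
      have := hB 1 0
      simp only [hprod] at this
      rw [hg01, hg21, hg11] at this
      simp at this
      rcases this with h | h
      · exact absurd h hc0
      · simpa using congrArg (starRingEnd ℂ) h
    have e12 : g 1 2 = 0 := by
      have := hB 1 2
      simp only [hprod] at this
      rw [hg01, hg21, hg11] at this
      simp at this
      rcases this with h | h
      · exact absurd h hc0
      · simpa using congrArg (starRingEnd ℂ) h
    have h1 : g 0 0 * conj (g 2 0) + g 2 0 * conj (g 0 0) = 0 := by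
      have := hB 0 0
      simp only [hprod] at this
      rw [e10] at this
      simp at this
      linear_combination -this
    have h2 : g 0 2 * conj (g 2 2) + g 2 2 * conj (g 0 2) = 0 := by
      have := hB 2 2
      simp only [hprod] at this
      rw [e12] at this
      simp at this
      linear_combination -this
    have h3 : g 0 0 * conj (g 2 2) + g 2 0 * conj (g 0 2) = 1 := by
      have := hB 0 2
      simp only [hprod] at this
      rw [e10] at this
      simp at this
      linear_combination -this
    have h3' : conj (g 0 0) * g 2 2 + conj (g 2 0) * g 0 2 = 1 := by
      have := congrArg (starRingEnd ℂ) h3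
      simp only [map_add, _root_.map_mul, _root_.map_one, Complex.conj_conj] at this
      linear_combination this
    have hdet3 : c0 * (g 0 0 * g 2 2 - g 0 2 * g 2 0) = 1 := by
      rw [Matrix.det_fin_three] at hdet
      rw [hg01, hg21, hg11, e10, e12] at hdet
      linear_combination hdet
    have hδ0 : g 0 0 * g 2 2 - g 0 2 * g 2 0 ≠ 0 := by
      intro h; rw [h] at hdet3; simp at hdet3
    have cu : conj (g 0 0) * (g 0 0 * g 2 2 - g 0 2 * g 2 0) = g 0 0 := by
      linear_combination g 0 0 * h3' - g 0 2 * h1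
    have cv : conj (g 0 2) * (g 0 0 * g 2 2 - g 0 2 * g 2 0) = -(g 0 2) := by
      linear_combination g 0 0 * h2 - g 0 2 * h3
    have cw : conj (g 2 0) * (g 0 0 * g 2 2 - g 0 2 * g 2 0) = -(g 2 0) := by
      linear_combination g 2 2 * h1 - g 2 0 * h3'
    have cx : conj (g 2 2) * (g 0 0 * g 2 2 - g 0 2 * g 2 0) = g 2 2 := by
      linear_combination g 2 2 * h3 - g 2 0 * h2
    have hδconj : (conj (g 0 0) * conj (g 2 2) - conj (g 0 2) * conj (g 2 0))
        * (g 0 0 * g 2 2 - g 0 2 * g 2 0) = 1 := by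
      have h5 : (conj (g 0 0) * conj (g 2 2) - conj (g 0 2) * conj (g 2 0))
          * (g 0 0 * g 2 2 - g 0 2 * g 2 0) * (g 0 0 * g 2 2 - g 0 2 * g 2 0)
          = 1 * (g 0 0 * g 2 2 - g 0 2 * g 2 0) := by
        linear_combination (conj (g 2 2) * (g 0 0 * g 2 2 - g 0 2 * g 2 0)) * cu
          + g 0 0 * cx - (conj (g 2 0) * (g 0 0 * g 2 2 - g 0 2 * g 2 0)) * cv
          + g 0 2 * cw
      exact mul_right_cancel₀ hδ0 h5
    obtain ⟨ζ, hζ2⟩ := IsAlgClosed.exists_pow_nat_eq (g 0 0 * g 2 2 - g 0 2 * g 2 0)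
      (n := 2) (by norm_num)
    have hconjδ : conj ζ ^ 2 = conj (g 0 0) * conj (g 2 2) - conj (g 0 2) * conj (g 2 0) := by
      have := congrArg (starRingEnd ℂ) hζ2
      simpa [map_pow, map_sub, _root_.map_mul] using this
    have hζconj : conj ζ * ζ = 1 := by
      have h6 : (conj ζ * ζ) ^ 2 = 1 := by
        rw [mul_pow, hζ2, hconjδ, hδconj]
      have h7 : conj ζ * ζ = ((Complex.normSq ζ : ℝ) : ℂ) := by
        rw [Complex.normSq_eq_conj_mul_self]
      rw [h7] at h6 ⊢
      have h9 : (Complex.normSq ζ) ^ 2 = 1 := by exact_mod_cast h6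
      have h10 : Complex.normSq ζ = 1 := by nlinarith [Complex.normSq_nonneg ζ]
      rw [h10]; norm_num
    have habsζ : ‖ζ‖ = 1 := by
      have hn : Complex.normSq ζ = 1 := by
        have : ((Complex.normSq ζ : ℝ) : ℂ) = 1 := by
          rw [Complex.normSq_eq_conj_mul_self]; exact hζconj
        exact_mod_cast this
      rw [Complex.norm_def, hn, Real.sqrt_one]
    have cu' : conj (g 0 0) * ζ ^ 2 = g 0 0 := by rw [hζ2]; exact cu
    have cv' : conj (g 0 2) * ζ ^ 2 = -(g 0 2) := by rw [hζ2]; exact cv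
    have cw' : conj (g 2 0) * ζ ^ 2 = -(g 2 0) := by rw [hζ2]; exact cw
    have cx' : conj (g 2 2) * ζ ^ 2 = g 2 2 := by rw [hζ2]; exact cx
    have ra : conj (conj ζ * g 0 0) = conj ζ * g 0 0 := by
      simp only [_root_.map_mul, Complex.conj_conj]
      linear_combination conj ζ * cu' - ζ * conj (g 0 0) * hζconj
    have rd : conj (conj ζ * g 2 2) = conj ζ * g 2 2 := by
      simp only [_root_.map_mul, Complex.conj_conj]
      linear_combination conj ζ * cx' - ζ * conj (g 2 2) * hζconj
    have rb : conj (-(Complex.I) * conj ζ * g 0 2) = -(Complex.I) * conj ζ * g 0 2 := by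
      simp only [_root_.map_mul, map_neg, Complex.conj_conj, Complex.conj_I]
      linear_combination Complex.I * conj ζ * cv' - Complex.I * ζ * conj (g 0 2) * hζconj
    have rc : conj (Complex.I * conj ζ * g 2 0) = Complex.I * conj ζ * g 2 0 := by
      simp only [_root_.map_mul, Complex.conj_conj, Complex.conj_I]
      linear_combination -Complex.I * conj ζ * cw' + Complex.I * ζ * conj (g 2 0) * hζconj
    have haC : (((conj ζ * g 0 0).re : ℝ) : ℂ) = conj ζ * g 0 0 := Complex.conj_eq_iff_re.mp ra
    have hbC : (((-(Complex.I) * conj ζ * g 0 2).re : ℝ) : ℂ) = -(Complex.I) * conj ζ * g 0 2 :=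
      Complex.conj_eq_iff_re.mp rb
    have hcC : (((Complex.I * conj ζ * g 2 0).re : ℝ) : ℂ) = Complex.I * conj ζ * g 2 0 :=
      Complex.conj_eq_iff_re.mp rc
    have hdC : (((conj ζ * g 2 2).re : ℝ) : ℂ) = conj ζ * g 2 2 := Complex.conj_eq_iff_re.mp rd
    obtain ⟨A, hA⟩ : ∃ A : ℝ, ((A : ℝ) : ℂ) = conj ζ * g 0 0 := ⟨_, haC⟩
    obtain ⟨B, hBr⟩ : ∃ B : ℝ, ((B : ℝ) : ℂ) = -(Complex.I) * conj ζ * g 0 2 := ⟨_, hbC⟩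
    obtain ⟨C, hCr⟩ : ∃ C : ℝ, ((C : ℝ) : ℂ) = Complex.I * conj ζ * g 2 0 := ⟨_, hcC⟩
    obtain ⟨D, hD⟩ : ∃ D : ℝ, ((D : ℝ) : ℂ) = conj ζ * g 2 2 := ⟨_, hdC⟩
    refine ⟨A, B, C, D, ζ, ?_, habsζ, ?_⟩
    · have hcomplex : (conj ζ * g 0 0) * (conj ζ * g 2 2)
          - (-(Complex.I) * conj ζ * g 0 2) * (Complex.I * conj ζ * g 2 0) = 1 := by
        linear_combination hδconj + (g 0 0 * g 2 2 - g 0 2 * g 2 0) * hconjδ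
          + (conj ζ ^ 2 * g 0 2 * g 2 0) * Complex.I_sq
      have hcast : ((A * D - B * C : ℝ) : ℂ) = 1 := by
        push_cast
        rw [hA, hBr, hCr, hD]
        linear_combination hcomplex
      exact_mod_cast hcast
    · have h00 : g 0 0 = ζ * ((A : ℝ) : ℂ) := by
        rw [hA]; linear_combination -(g 0 0) * hζconj
      have h02 : g 0 2 = Complex.I * ζ * ((B : ℝ) : ℂ) := by
        rw [hBr]
        linear_combination -(g 0 2) * hζconj + (g 0 2 * ζ * conj ζ) * Complex.I_sq
      have h20 : g 2 0 = -(Complex.I * ζ * ((C : ℝ) : ℂ)) := by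
        rw [hCr]
        linear_combination -(g 2 0) * hζconj + (g 2 0 * ζ * conj ζ) * Complex.I_sq
      have h22 : g 2 2 = ζ * ((D : ℝ) : ℂ) := by
        rw [hD]; linear_combination -(g 2 2) * hζconj
      have h11 : g 1 1 = (ζ ^ 2)⁻¹ := by
        rw [hg11]
        have : c0 * ζ ^ 2 = 1 := by rw [hζ2]; exact hdet3
        exact eq_inv_of_mul_eq_one_left this
      rw [Matrix.eta_fin_three g]
      rw [hg01, hg21, e10, e12, h11, h00, h02, h20, h22]
  · rintro ⟨a, b, c, d, ζ, had, habs, rfl⟩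
    refine ⟨(ζ ^ 2)⁻¹, ?_⟩
    funext i
    fin_cases i <;> simp [Matrix.mulVec, dotProduct, Fin.sum_univ_three]
end
end
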